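/- arXiv:math/0702182 — 5 statements merged into one kernel-verified Lean document; each statement's English description precedes it below -/
import Mathlib

section
/- Let q be a prime, let G be a transitive permutation group on a finite set Ω of size mq admitting a G-invariant partition B of Ω, and let H be a subgroup of G having exactly m orbits on Ω, each of length q. Let S be an orbit of H and let B ∈ B satisfy B ∩ S ≠ ∅. Then either (i) |B ∩ S| = 1, and in this case |B ∩ S'| = 1 for every orbit S' of H meeting B, or (ii) S ⊆ B, and in this case q divides |B|. -/
open SimpleGraph

/-- A graph is vertex-transitive if any vertex can be mapped to any other by an automorphism. -/
def SimpleGraph.IsVertexTransitive {V : Type*} (X : SimpleGraph V) : Prop :=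
  ∀ u v : V, ∃ φ : X ≃g X, φ u = v

/-- A graph has a Hamilton path if some walk visits every vertex exactly once. -/
def SimpleGraph.HasHamiltonianPath {V : Type*} [DecidableEq V] (X : SimpleGraph V) : Prop :=
  ∃ (u v : V) (w : X.Walk u v), w.IsHamiltonian

/-- A graph has a Hamilton cycle if some closed walk is a Hamiltonian cycle. -/
def SimpleGraph.HasHamiltonianCycle {V : Type*} [DecidableEq V] (X : SimpleGraph V) : Prop :=
  ∃ (u : V) (w : X.Walk u u), w.IsHamiltonianCycle

/-- A subgroup of the automorphism group acts transitively on the vertices. -/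
def SimpleGraph.IsTransitiveSubgroup {V : Type*} (X : SimpleGraph V)
    (G : Subgroup (X ≃g X)) : Prop :=
  ∀ u v : V, ∃ g ∈ G, g u = v

/-- The orbit of a vertex under a subgroup of the automorphism group. -/
def SimpleGraph.autOrbit {V : Type*} (X : SimpleGraph V) (N : Subgroup (X ≃g X))
    (v : V) : Set V :=
  {w | ∃ g ∈ N, g v = w}

/-- `N` is a subgroup of `G` which is normal in `G`. -/
def SimpleGraph.IsNormalIn {V : Type*} (X : SimpleGraph V)
    (N G : Subgroup (X ≃g X)) : Prop :=
  N ≤ G ∧ ∀ g ∈ G, ∀ n ∈ N, g * n * g⁻¹ ∈ N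

/-- `N` is a minimal normal subgroup of the (subgroup) `G`: it is a nontrivial normal
subgroup of `G` and the only normal subgroups of `G` contained in it are `⊥` and `N`. -/
def SimpleGraph.IsMinimalNormalIn {V : Type*} (X : SimpleGraph V)
    (N G : Subgroup (X ≃g X)) : Prop :=
  X.IsNormalIn N G ∧ N ≠ ⊥ ∧
    ∀ M : Subgroup (X ≃g X), X.IsNormalIn M G → M ≤ N → M = ⊥ ∨ M = N

/-- An automorphism `ρ` is `(m,n)`-semiregular if the cyclic group it generates has exactly
`m` orbits on the vertex set, each of size `n`. -/
def SimpleGraph.IsSemiregular {V : Type*} (X : SimpleGraph V) (ρ : X ≃g X)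
    (m n : ℕ) : Prop :=
  (∀ v : V, (X.autOrbit (Subgroup.zpowers ρ) v).ncard = n) ∧
    {S : Set V | ∃ v, S = X.autOrbit (Subgroup.zpowers ρ) v}.ncard = m

/-- The quotient graph of `X` corresponding to a partition `P` of its vertex set. -/
def SimpleGraph.quotientGraph {V : Type*} (X : SimpleGraph V) (P : Set (Set V)) :
    SimpleGraph ↥P where
  Adj A B := A ≠ B ∧ ∃ a ∈ (A : Set V), ∃ b ∈ (B : Set V), X.Adj a b
  symm := ⟨by
    rintro A B ⟨hne, a, ha, b, hb, hab⟩
    exact ⟨hne.symm, b, hb, a, ha, hab.symm⟩⟩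
  loopless := ⟨fun A h => h.1 rfl⟩

/-- The Petersen graph: vertices are the 2-element subsets of a 5-element set, adjacent
when disjoint. -/
def PetersenGraph : SimpleGraph {s : Finset (Fin 5) // s.card = 2} where
  Adj s t := Disjoint (s : Finset (Fin 5)) (t : Finset (Fin 5))
  symm := ⟨fun _ _ h => h.symm⟩
  loopless := ⟨fun s h => by
    have hs : (s : Finset (Fin 5)) = ⊥ := disjoint_self.mp h
    have h2 := s.2
    rw [hs] at h2
    simp at h2⟩

/-- The truncation of a graph `Y`: vertices are incident vertex-edge pairs, two pairs being
adjacent iff they share the vertex but not the edge, or share the edge but not the vertex. -/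
def SimpleGraph.truncation {W : Type*} (Y : SimpleGraph W) :
    SimpleGraph {ve : W × Y.edgeSet // ve.1 ∈ (ve.2 : Sym2 W)} where
  Adj a b := (a.1.1 = b.1.1 ∧ a.1.2 ≠ b.1.2) ∨ (a.1.2 = b.1.2 ∧ a.1.1 ≠ b.1.1)
  symm := ⟨by
    rintro a b (⟨h1, h2⟩ | ⟨h1, h2⟩)
    · exact Or.inl ⟨h1.symm, h2.symm⟩
    · exact Or.inr ⟨h1.symm, h2.symm⟩⟩
  loopless := ⟨fun a h => by rcases h with ⟨_, h⟩ | ⟨_, h⟩ <;> exact h rfl⟩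

/-- A graph is genuinely imprimitive if some transitive subgroup of its automorphism group
has a nontrivial intransitive normal subgroup. -/
def SimpleGraph.IsGenuinelyImprimitive {V : Type*} (X : SimpleGraph V) : Prop :=
  ∃ G N : Subgroup (X ≃g X), X.IsTransitiveSubgroup G ∧ X.IsNormalIn N G ∧
    N ≠ ⊥ ∧ ¬ X.IsTransitiveSubgroup N

/-- A partition of the vertex set invariant under a subgroup of automorphisms. -/
def SimpleGraph.IsInvariantPartition {V : Type*} (X : SimpleGraph V)
    (G : Subgroup (X ≃g X)) (P : Set (Set V)) : Prop :=
  Setoid.IsPartition P ∧ ∀ g ∈ G, ∀ B ∈ P, (g : X ≃g X) '' B ∈ P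

/-- A graph is quasiprimitive if some transitive subgroup of its automorphism group preserves
a nontrivial partition of the vertex set, but no transitive subgroup of the automorphism
group has a nontrivial intransitive normal subgroup. -/
def SimpleGraph.IsQuasiprimitive {V : Type*} (X : SimpleGraph V) : Prop :=
  (∃ G : Subgroup (X ≃g X), X.IsTransitiveSubgroup G ∧
    ∃ P : Set (Set V), X.IsInvariantPartition G P ∧
      P ≠ Set.range (fun v => ({v} : Set V)) ∧ P ≠ {Set.univ}) ∧
  ¬ X.IsGenuinelyImprimitive

/-- A graph is primitive if every transitive subgroup of its automorphism group preserves
only the trivial partitions of the vertex set. -/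
def SimpleGraph.IsPrimitiveGraph {V : Type*} (X : SimpleGraph V) : Prop :=
  ∀ G : Subgroup (X ≃g X), X.IsTransitiveSubgroup G →
    ∀ P : Set (Set V), X.IsInvariantPartition G P →
      P = Set.range (fun v => ({v} : Set V)) ∨ P = {Set.univ}



open MulAction

/-- The setwise stabilizer of a set `B` inside a permutation subgroup `H`. -/
private def permSetStab {Ω : Type*} (H : Subgroup (Equiv.Perm Ω)) (B : Set Ω) : Subgroup H where
  carrier := {h | ⇑(h : Equiv.Perm Ω) '' B = B}
  one_mem' := by simp
  mul_mem' := by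
    intro a b ha hb
    simp only [Set.mem_setOf_eq] at *
    rw [Subgroup.coe_mul, Equiv.Perm.coe_mul, Set.image_comp, hb, ha]
  inv_mem' := by
    intro a ha
    simp only [Set.mem_setOf_eq] at *
    conv_lhs => rw [← ha, ← Set.image_comp]
    simp

private lemma mem_permSetStab {Ω : Type*} {H : Subgroup (Equiv.Perm Ω)} {B : Set Ω} {h : H} :
    h ∈ permSetStab H B ↔ ⇑(h : Equiv.Perm Ω) '' B = B := Iff.rfl

private lemma aux_orbit_card_dvd {Ω : Type*} (H : Subgroup (Equiv.Perm Ω))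
    (K : Subgroup H) (s : Ω) (hle : stabilizer H s ≤ K) :
    Nat.card (orbit K s) ∣ Nat.card (orbit H s) := by
  have h1 : Nat.card (orbit K s) = (stabilizer K s).index := by
    rw [Nat.card_congr (orbitEquivQuotientStabilizer K s), Subgroup.index_eq_card]
  have h2 : Nat.card (orbit H s) = (stabilizer H s).index := by
    rw [Nat.card_congr (orbitEquivQuotientStabilizer H s), Subgroup.index_eq_card]
  have h3 : stabilizer K s = (stabilizer H s).subgroupOf K := by
    ext k
    simp only [MulAction.mem_stabilizer_iff, Subgroup.mem_subgroupOf]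
    rfl
  rw [h1, h2, h3]
  exact Subgroup.relIndex_dvd_index_of_le hle

/-- A finite set closed under a group action whose orbits all have size `q`
has cardinality divisible by `q`. -/
private lemma aux_dvd_ncard {Ω : Type*} [Fintype Ω] (H : Subgroup (Equiv.Perm Ω)) (q : ℕ)
    (hq : 0 < q) (horb : ∀ ω : Ω, (orbit H ω).ncard = q) :
    ∀ n (T : Set Ω), T.ncard = n → (∀ x ∈ T, orbit H x ⊆ T) → q ∣ T.ncard := by
  intro n
  induction n using Nat.strong_induction_on with
  | _ n ih =>
    intro T hn hcl
    rcases T.eq_empty_or_nonempty with rfl | ⟨x, hx⟩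
    · simp
    have hOT : orbit H x ⊆ T := hcl x hx
    have hsplit : T = orbit H x ∪ (T \ orbit H x) := by
      rw [Set.union_diff_cancel hOT]
    have hdisj : Disjoint (orbit H x) (T \ orbit H x) := Set.disjoint_sdiff_right
    have hcard : T.ncard = q + (T \ orbit H x).ncard := by
      conv_lhs => rw [hsplit]
      rw [Set.ncard_union_eq hdisj (Set.toFinite _) (Set.toFinite _), horb x]
    have hcl' : ∀ y ∈ T \ orbit H x, orbit H y ⊆ T \ orbit H x := by
      rintro y ⟨hyT, hyO⟩ z hz
      refine ⟨hcl y hyT hz, fun hzO => hyO ?_⟩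
      rw [← orbit_eq_iff.mpr hzO, orbit_eq_iff.mpr hz]
      exact mem_orbit_self y
    have hlt : (T \ orbit H x).ncard < n := by omega
    have := ih _ hlt (T \ orbit H x) rfl hcl'
    rw [hcard]
    exact Nat.dvd_add (dvd_refl q) this

section Main
variable {Ω : Type*} [Fintype Ω]

/-- Dichotomy: a block meeting an orbit meets it in 1 point or contains it. -/
private lemma aux_dichotomy (q : ℕ) (hq : q.Prime)
    (G : Subgroup (Equiv.Perm Ω))
    (P : Set (Set Ω)) (hP : Setoid.IsPartition P)
    (hinv : ∀ g ∈ G, ∀ B ∈ P, (⇑g) '' B ∈ P)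
    (H : Subgroup (Equiv.Perm Ω)) (hHG : H ≤ G)
    (horb : ∀ ω : Ω, (MulAction.orbit H ω).ncard = q)
    (S : Set Ω) (hS : ∃ ω, S = MulAction.orbit H ω)
    (B : Set Ω) (hB : B ∈ P) (hBS : (B ∩ S).Nonempty) :
    (B ∩ S).ncard = 1 ∨ S ⊆ B := by
  obtain ⟨s, hsB, hsS⟩ := hBS
  obtain ⟨ω, rfl⟩ := hS
  have hSs : orbit H ω = orbit H s := (orbit_eq_iff.mpr hsS).symm
  rw [hSs] at hsS ⊢
  set K := permSetStab H B with hK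
  have huniq : ∀ B₁ ∈ P, ∀ B₂ ∈ P, ∀ x, x ∈ B₁ → x ∈ B₂ → B₁ = B₂ := by
    intro B₁ h₁ B₂ h₂ x hx₁ hx₂
    obtain ⟨b, -, hbu⟩ := hP.2 x
    rw [hbu B₁ ⟨h₁, hx₁⟩, hbu B₂ ⟨h₂, hx₂⟩]
  -- B ∩ orbit H s = orbit K s
  have hBSeq : B ∩ orbit H s = orbit K s := by
    ext x
    constructor
    · rintro ⟨hxB, hxS⟩
      obtain ⟨h, rfl⟩ := mem_orbit_iff.mp hxS
      have himg : ⇑(h : Equiv.Perm Ω) '' B ∈ P := hinv _ (hHG h.2) B hB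
      have hxim : h • s ∈ ⇑(h : Equiv.Perm Ω) '' B := ⟨s, hsB, rfl⟩
      have heq : ⇑(h : Equiv.Perm Ω) '' B = B := huniq _ himg _ hB _ hxim hxB
      exact mem_orbit_iff.mpr ⟨⟨h, heq⟩, rfl⟩
    · rintro ⟨k, rfl⟩
      have hk : ⇑((k : H) : Equiv.Perm Ω) '' B = B := k.2
      constructor
      · have : ((k : H) : Equiv.Perm Ω) s ∈ ⇑((k : H) : Equiv.Perm Ω) '' B := ⟨s, hsB, rfl⟩
        rw [hk] at this
        exact this
      · exact mem_orbit_iff.mpr ⟨(k : H), rfl⟩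
  -- stabilizer of point ≤ K
  have hle : stabilizer H s ≤ K := by
    intro h hh
    have hmem : (h : Equiv.Perm Ω) s = s := hh
    have himg : ⇑(h : Equiv.Perm Ω) '' B ∈ P := hinv _ (hHG h.2) B hB
    exact huniq _ himg _ hB s ⟨s, hsB, hmem⟩ hsB
  have hdvd : (B ∩ orbit H s).ncard ∣ q := by
    rw [hBSeq, ← Nat.card_coe_set_eq, ← horb s, ← Nat.card_coe_set_eq]
    exact aux_orbit_card_dvd H K s hle
  rcases (Nat.Prime.eq_one_or_self_of_dvd hq _ hdvd) with h1 | hqq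
  · exact Or.inl h1
  · right
    have : B ∩ orbit H s = orbit H s := by
      apply Set.eq_of_subset_of_ncard_le Set.inter_subset_right
      rw [hqq, horb s]
    intro x hx
    rw [← this] at hx
    exact hx.1

end Main

private lemma aux_invariant {Ω : Type*}
    (G : Subgroup (Equiv.Perm Ω))
    (P : Set (Set Ω)) (hP : Setoid.IsPartition P)
    (hinv : ∀ g ∈ G, ∀ B ∈ P, (⇑g) '' B ∈ P)
    (H : Subgroup (Equiv.Perm Ω)) (hHG : H ≤ G)
    (ω : Ω) (B : Set Ω) (hB : B ∈ P) (hSB : orbit H ω ⊆ B) :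
    ∀ x ∈ B, orbit H x ⊆ B := by
  have huniq : ∀ B₁ ∈ P, ∀ B₂ ∈ P, ∀ x, x ∈ B₁ → x ∈ B₂ → B₁ = B₂ := by
    intro B₁ h₁ B₂ h₂ x hx₁ hx₂
    obtain ⟨b, -, hbu⟩ := hP.2 x
    rw [hbu B₁ ⟨h₁, hx₁⟩, hbu B₂ ⟨h₂, hx₂⟩]
  have hωB : ω ∈ B := hSB (mem_orbit_self ω)
  have hfix : ∀ h : H, ⇑(h : Equiv.Perm Ω) '' B = B := by
    intro h
    have himg : ⇑(h : Equiv.Perm Ω) '' B ∈ P := hinv _ (hHG h.2) B hB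
    exact huniq _ himg _ hB (h • ω) ⟨ω, hωB, rfl⟩ (hSB (mem_orbit _ _))
  rintro x hx y ⟨h, rfl⟩
  rw [← hfix h]
  exact ⟨x, hx, rfl⟩

theorem block_orbit_intersection
    {Ω : Type*} [Fintype Ω] (q m : ℕ) (hq : q.Prime)
    (hcard : Fintype.card Ω = m * q)
    (G : Subgroup (Equiv.Perm Ω)) (hG : ∀ a b : Ω, ∃ g ∈ G, g a = b)
    (P : Set (Set Ω)) (hP : Setoid.IsPartition P)
    (hinv : ∀ g ∈ G, ∀ B ∈ P, (⇑g) '' B ∈ P)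
    (H : Subgroup (Equiv.Perm Ω)) (hHG : H ≤ G)
    (horb : ∀ ω : Ω, (MulAction.orbit H ω).ncard = q)
    (hm : {S : Set Ω | ∃ ω, S = MulAction.orbit H ω}.ncard = m)
    (S : Set Ω) (hS : ∃ ω, S = MulAction.orbit H ω)
    (B : Set Ω) (hB : B ∈ P) (hBS : (B ∩ S).Nonempty) :
    ((B ∩ S).ncard = 1 ∧ ∀ S' : Set Ω, (∃ ω, S' = MulAction.orbit H ω) →
        (B ∩ S').Nonempty → (B ∩ S').ncard = 1) ∨
      (S ⊆ B ∧ q ∣ B.ncard) := by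
  rcases aux_dichotomy q hq G P hP hinv H hHG horb S hS B hB hBS with h1 | hSB
  · left
    refine ⟨h1, fun S' hS' hBS' => ?_⟩
    rcases aux_dichotomy q hq G P hP hinv H hHG horb S' hS' B hB hBS' with h1' | hSB'
    · exact h1'
    · -- S' ⊆ B forces B to be H-invariant, contradicting (B ∩ S).ncard = 1
      exfalso
      obtain ⟨ω', rfl⟩ := hS'
      have hBinv := aux_invariant G P hP hinv H hHG ω' B hB hSB'
      obtain ⟨s, hsB, hsS⟩ := hBS
      obtain ⟨ω, rfl⟩ := hS
      have hSeq : orbit H ω = orbit H s := (orbit_eq_iff.mpr hsS).symm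
      have : B ∩ orbit H ω = orbit H ω := by
        apply Set.eq_of_subset_of_ncard_le Set.inter_subset_right
        rw [hSeq]
        exact Set.ncard_le_ncard (fun y hy => ⟨hBinv s hsB hy, hy⟩) (Set.toFinite _)
      rw [this, horb] at h1
      exact hq.one_lt.ne' h1
  · right
    refine ⟨hSB, ?_⟩
    obtain ⟨ω, rfl⟩ := hS
    have hBinv := aux_invariant G P hP hinv H hHG ω B hB hSB
    exact aux_dvd_ncard H q hq.pos horb B.ncard B rfl hBinv
end

section
/- Let p be a prime, let G be a finite group acting on a finite set Ω, let P be a Sylow p-subgroup of G, and let ω ∈ Ω. If p^m divides the cardinality of the G-orbit of ω, then p^m also divides the cardinality of the P-orbit of ω. -/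
open SimpleGraph

theorem pow_prime_dvd_sylow_orbit
    {G : Type*} [Group G] [Fintype G] {Ω : Type*} [MulAction G Ω]
    (p m : ℕ) (hp : p.Prime) (P : Sylow p G) (ω : Ω)
    (h : p ^ m ∣ Nat.card (MulAction.orbit G ω)) :
    p ^ m ∣ Nat.card (MulAction.orbit (P : Subgroup G) ω) := by
  haveI : Fact p.Prime := ⟨hp⟩
  rw [Nat.card_coe_set_eq, ← MulAction.index_stabilizer] at h ⊢
  set H := MulAction.stabilizer G ω
  set Q := MulAction.stabilizer (P : Subgroup G) ω
  -- stabilizer in P maps into stabilizer in G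
  have hmaple : Q.map (P : Subgroup G).subtype ≤ H := by
    rintro x ⟨q, hq, rfl⟩
    simpa [H, Q, MulAction.mem_stabilizer_iff, Subgroup.smul_def] using hq
  have hQcard : Nat.card Q = Nat.card (Q.map (P : Subgroup G).subtype) :=
    Nat.card_congr (Q.equivMapOfInjective _ (P : Subgroup G).subtype_injective).toEquiv
  have hQdvdH : Nat.card Q ∣ Nat.card H := by
    rw [hQcard]; exact Subgroup.card_dvd_of_le hmaple
  obtain ⟨k, hk⟩ := (IsPGroup.iff_card).mp (P.2.to_subgroup Q)
  have hn : Nat.card (P : Subgroup G) = p ^ (Nat.card G).factorization p :=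
    P.card_eq_multiplicity
  set n := (Nat.card G).factorization p
  -- p^(k+m) divides |G|
  have hkm : p ^ (k + m) ∣ Nat.card G := by
    rw [← H.card_mul_index, pow_add]
    exact mul_dvd_mul (hk ▸ hQdvdH) h
  have hle : k + m ≤ n := by
    have := (Nat.Prime.pow_dvd_iff_le_factorization hp (Nat.card_pos (α := G)).ne').mp hkm
    exact this
  have horbP : Nat.card Q * Q.index = p ^ n := by
    rw [Q.card_mul_index]; exact hn
  have : p ^ k * Q.index = p ^ n := by rw [← hk]; exact horbP
  have hkn : k ≤ n := le_trans (Nat.le_add_right k m) hle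
  have hQindex : Q.index = p ^ (n - k) :=
    Nat.eq_of_mul_eq_mul_left (pow_pos hp.pos k)
      (by rw [this, ← pow_sub_mul_pow p hkn, mul_comm])
  rw [hQindex]
  exact pow_dvd_pow p (by omega)
end

section
/- Let p be a prime, let m < p be a positive integer, let X be a vertex-transitive finite simple graph on mp vertices, and let G be a transitive subgroup of the automorphism group of X. Then G contains an (m,p)-semiregular automorphism of X. -/
open SimpleGraph

open MulAction

namespace SemiregularAux

instance graphAutAction {V : Type*} (X : SimpleGraph V) : MulAction (X ≃g X) V where
  smul φ v := φ v
  one_smul _ := rfl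
  mul_smul _ _ _ := rfl

open MulAction


lemma normal_of_index_eq_p {P : Type*} [Group P] [Finite P] {p : ℕ} (hp : p.Prime)
    (hP : IsPGroup p P) (H : Subgroup P) (hidx : H.index = p) : H.Normal := by
  haveI : Fact p.Prime := ⟨hp⟩
  have hle : H.normalCore ≤ H := Subgroup.normalCore_le H
  obtain ⟨n, hn⟩ := hP.index H.normalCore
  have hker : H.normalCore = (MulAction.toPermHom P (P ⧸ H)).ker := Subgroup.normalCore_eq_ker H
  have hdvd : H.normalCore.index ∣ Nat.factorial p := by
    rw [hker, Subgroup.index_ker]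
    have h1 : Nat.card (MulAction.toPermHom P (P ⧸ H)).range ∣ Nat.card (Equiv.Perm (P ⧸ H)) :=
      Subgroup.card_subgroup_dvd_card _
    have h2 : Nat.card (Equiv.Perm (P ⧸ H)) = Nat.factorial (Nat.card (P ⧸ H)) := by
      have : Fintype (P ⧸ H) := Fintype.ofFinite _
      have : DecidableEq (P ⧸ H) := Classical.decEq _
      rw [Nat.card_eq_fintype_card, Nat.card_eq_fintype_card, Fintype.card_perm]
    rwa [h2, show Nat.card (P ⧸ H) = p from hidx ▸ rfl] at h1
  have hpd : p ∣ H.normalCore.index := hidx ▸ Subgroup.index_dvd_of_le hle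
  have hn1 : n = 1 := by
    rcases Nat.lt_or_ge n 2 with h | h
    · interval_cases n
      · exfalso; rw [hn, pow_zero] at hpd
        exact hp.ne_one (Nat.dvd_one.mp hpd)
      · rfl
    · exfalso
      have h2 : p ^ 2 ∣ Nat.factorial p := dvd_trans (pow_dvd_pow p h) (hn ▸ hdvd)
      have hp2 : p * p ∣ p * Nat.factorial (p - 1) := by
        rw [← pow_two, Nat.mul_factorial_pred hp.ne_zero]; exact h2
      have h3 : p ∣ Nat.factorial (p - 1) :=
        (mul_dvd_mul_iff_left hp.ne_zero).mp hp2
      have h5 : p ≤ p - 1 := (Nat.Prime.dvd_factorial hp).mp h3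
      have h6 : 0 < p := hp.pos
      omega
  have heq : H.normalCore = H := by
    have h3 := Subgroup.relIndex_mul_index hle
    rw [hidx, hn, hn1, pow_one] at h3
    have h4 : H.normalCore.relIndex H = 1 := by
      have hp0 : 0 < p := hp.pos
      nlinarith [h3]
    exact le_antisymm hle (Subgroup.relIndex_eq_one.mp h4)
  rw [← heq]; exact Subgroup.normalCore_normal H


lemma card_orbitQuotient_mul {P V : Type*} [Group P] [Finite P] [Finite V] [MulAction P V]
    {p : ℕ} (horb : ∀ v : V, (MulAction.orbit P v).ncard = p) :
    Nat.card (orbitRel.Quotient P V) * p = Nat.card V := by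
  classical
  haveI : Fintype V := Fintype.ofFinite V
  haveI : Fintype (orbitRel.Quotient P V) := Fintype.ofFinite _
  letI : ∀ ω : orbitRel.Quotient P V, Fintype ω.orbit := fun ω => Fintype.ofFinite _
  have e := (MulAction.selfEquivSigmaOrbits' P V)
  have h1 : Nat.card V = ∑ ω : orbitRel.Quotient P V, Nat.card ω.orbit := by
    rw [Nat.card_congr e]
    rw [Nat.card_eq_fintype_card, Fintype.card_sigma]
    congr 1; ext ω; rw [Nat.card_eq_fintype_card]
  have h2 : ∀ ω : orbitRel.Quotient P V, Nat.card ω.orbit = p := by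
    intro ω
    rw [orbitRel.Quotient.orbit_eq_orbit_out ω Quotient.out_eq']
    rw [Nat.card_coe_set_eq]
    exact horb _
  rw [h1]
  have h3 : ∑ ω : orbitRel.Quotient P V, Nat.card ω.orbit
      = ∑ _ω : orbitRel.Quotient P V, p := by
    exact Finset.sum_congr rfl (fun ω _ => h2 ω)
  rw [h3, Finset.sum_const, smul_eq_mul, Nat.card_eq_fintype_card, Fintype.card]

lemma stab_const_on_orbit {P V : Type*} [Group P] [MulAction P V]
    (hnorm : ∀ v : V, (stabilizer P v).Normal) (g : P) (v : V) :
    stabilizer P (g • v) = stabilizer P v := by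
  have hiff : ∀ x : P, x • (g • v) = g • v ↔ (g⁻¹ * x * g) • v = v := by
    intro x
    constructor
    · intro hx
      rw [mul_smul, mul_smul, hx, inv_smul_smul]
    · intro hx
      calc x • g • v = g • (g⁻¹ * x * g) • v := by
            rw [mul_smul, mul_smul, smul_inv_smul]
        _ = g • v := by rw [hx]
  ext x
  rw [mem_stabilizer_iff, mem_stabilizer_iff, hiff x]
  constructor
  · intro hx
    have h3 := (hnorm v).conj_mem _ hx g
    have he : g * (g⁻¹ * x * g) * g⁻¹ = x := by group
    rwa [he] at h3
  · intro hx
    have h3 := (hnorm v).conj_mem _ hx g⁻¹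
    have he : g⁻¹ * x * g⁻¹⁻¹ = g⁻¹ * x * g := by group
    rwa [he] at h3

lemma exists_fixed_point_free {P V : Type*} [Group P] [Finite P] [Finite V] [MulAction P V]
    {p : ℕ} (hp : p.Prime) (hP : IsPGroup p P)
    (horb : ∀ v : V, (MulAction.orbit P v).ncard = p)
    (hlt : Nat.card (orbitRel.Quotient P V) < p) :
    ∃ g : P, ∀ v : V, g • v ≠ v := by
  classical
  haveI : Fintype P := Fintype.ofFinite P
  haveI : Fintype (orbitRel.Quotient P V) := Fintype.ofFinite _
  have hidx : ∀ v : V, (stabilizer P v).index = p := by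
    intro v; rw [MulAction.index_stabilizer]; exact horb v
  have hnorm : ∀ v : V, (stabilizer P v).Normal := fun v =>
    normal_of_index_eq_p hp hP _ (hidx v)
  have hstab_orbit : ∀ v : V, stabilizer P v
      = stabilizer P (Quotient.mk'' v : orbitRel.Quotient P V).out := by
    intro v
    set w := (Quotient.mk'' v : orbitRel.Quotient P V).out with hw
    have hv : v ∈ MulAction.orbit P w := by
      rw [hw, ← orbitRel.Quotient.orbit_eq_orbit_out _ Quotient.out_eq',
        orbitRel.Quotient.orbit_mk]
      exact mem_orbit_self v
    obtain ⟨g, hg⟩ := hv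
    have hg' : g • w = v := hg
    rw [← hg']
    exact stab_const_on_orbit hnorm g w
  -- counting
  set Q := orbitRel.Quotient P V with hQ
  let T : Finset P := Finset.univ.biUnion
    (fun ω : Q => Finset.univ.filter (fun g : P => g ∈ stabilizer P (Quotient.out ω)))
  have hstabcard : ∀ v : V, Nat.card (stabilizer P v) * p = Nat.card P := by
    intro v
    have := Subgroup.index_mul_card (stabilizer P v)
    rw [hidx v] at this
    rw [mul_comm]
    exact this
  have hcards : ∀ ω : Q,
      (Finset.univ.filter (fun g : P => g ∈ stabilizer P (Quotient.out ω))).card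
        = Nat.card (stabilizer P (Quotient.out ω)) := by
    intro ω
    rw [Nat.card_eq_fintype_card, Fintype.card_subtype]
  have hP0 : 0 < Nat.card P := Nat.card_pos
  have hTlt : T.card < Fintype.card P := by
    have h1 : T.card ≤ ∑ ω : Q, Nat.card (stabilizer P (Quotient.out ω)) := by
      refine le_trans (Finset.card_biUnion_le) ?_
      exact Finset.sum_le_sum (fun ω _ => le_of_eq (hcards ω))
    have h2 : ∀ ω : Q, Nat.card (stabilizer P (Quotient.out ω)) * p = Nat.card P :=
      fun ω => hstabcard _
    -- all stabilizers have the same card s with s * p = card P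
    rcases Finset.univ.eq_empty_or_nonempty (α := Q) with hq | ⟨ω₀, _⟩
    · -- Q empty: V empty, any g works... but here: T empty
      have : T.card = 0 := by
        simp [T, hq]
      rw [this]; exact Fintype.card_pos
    · set s := Nat.card (stabilizer P (Quotient.out ω₀)) with hs
      have hsp : s * p = Nat.card P := h2 ω₀
      have hall : ∀ ω : Q, Nat.card (stabilizer P (Quotient.out ω)) = s := by
        intro ω
        have := h2 ω
        have hppos := hp.pos
        nlinarith [h2 ω, hsp]
      have h3 : T.card ≤ Fintype.card Q * s := by
        refine le_trans h1 ?_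
        rw [Finset.sum_congr rfl (fun ω _ => hall ω), Finset.sum_const, smul_eq_mul,
          Fintype.card]
      have hspos : 0 < s := by
        rcases Nat.eq_zero_or_pos s with h | h
        · rw [h, zero_mul] at hsp; omega
        · exact h
      have h4 : Fintype.card Q * s < p * s := by
        have : Fintype.card Q < p := by rwa [← Nat.card_eq_fintype_card]
        exact (Nat.mul_lt_mul_right hspos).mpr this
      have h5 : p * s = Fintype.card P := by
        rw [mul_comm, ← Nat.card_eq_fintype_card]; exact hsp
      omega
  have hTne : T ≠ Finset.univ := by
    intro h; rw [h, Finset.card_univ] at hTlt; omega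
  obtain ⟨g, hg⟩ : ∃ g : P, g ∉ T := by
    by_contra h
    push_neg at h
    exact hTne (Finset.eq_univ_of_forall h)
  refine ⟨g, fun v hv => ?_⟩
  apply hg
  refine Finset.mem_biUnion.mpr ⟨(Quotient.mk'' v : Q), Finset.mem_univ _, ?_⟩
  rw [Finset.mem_filter]
  refine ⟨Finset.mem_univ _, ?_⟩
  rw [← hstab_orbit v]
  exact hv

end SemiregularAux

open SemiregularAux in
theorem exists_semiregular_in_transitive_subgroup
    {V : Type*} [Fintype V] (p m : ℕ) (hp : p.Prime) (hm : 0 < m) (hmp : m < p)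
    (X : SimpleGraph V) (hcard : Fintype.card V = m * p)
    (hvt : X.IsVertexTransitive)
    (G : Subgroup (X ≃g X)) (hG : X.IsTransitiveSubgroup G) :
    ∃ ρ ∈ G, X.IsSemiregular ρ m p := by
  classical
  haveI : Finite (X ≃g X) :=
    Finite.of_injective (fun φ => (φ : V → V)) (fun a b h => by ext v; exact congrFun h v)
  haveI : Fact p.Prime := ⟨hp⟩
  have hV : Nat.card V = m * p := by rw [Nat.card_eq_fintype_card, hcard]
  have hVpos : 0 < Fintype.card V := by rw [hcard]; exact Nat.mul_pos hm hp.pos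
  haveI : Nonempty V := Fintype.card_pos_iff.mp hVpos
  -- orbits of G are everything
  have horbG : ∀ v : V, MulAction.orbit ↥G v = Set.univ := by
    intro v
    apply Set.eq_univ_of_forall
    intro u
    obtain ⟨g, hgG, hgv⟩ := hG v u
    exact ⟨⟨g, hgG⟩, hgv⟩
  have hGstab : ∀ v : V, (MulAction.stabilizer ↥G v).index = m * p := by
    intro v
    rw [MulAction.index_stabilizer, horbG v, Set.ncard_univ, hV]
  set a := (Nat.card ↥G).factorization p with ha
  let P : Sylow p ↥G := default
  set K : Subgroup ↥G := (P : Subgroup ↥G) with hK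
  have hPcard : Nat.card ↥K = p ^ a := P.card_eq_multiplicity
  have hGpos : 0 < Nat.card ↥G := Nat.card_pos
  -- orbits of the Sylow subgroup all have size p
  have horbK : ∀ v : V, (MulAction.orbit ↥K v).ncard = p := by
    intro v
    have hdvd : (MulAction.orbit ↥K v).ncard ∣ p ^ a := by
      rw [← MulAction.index_stabilizer, ← hPcard]
      exact Subgroup.index_dvd_card _
    obtain ⟨b, hb, hcb⟩ := (Nat.dvd_prime_pow hp).mp hdvd
    have hble : (MulAction.orbit ↥K v).ncard ≤ m * p := by
      have h := Set.ncard_le_ncard (Set.subset_univ (MulAction.orbit ↥K v)) Set.finite_univ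
      rwa [Set.ncard_univ, hV] at h
    have hb1 : b ≤ 1 := by
      by_contra hb2
      push_neg at hb2
      have h1 : p ^ 2 ≤ p ^ b := Nat.pow_le_pow_right hp.pos hb2
      have h2 : m * p < p ^ 2 := by
        rw [pow_two]
        exact Nat.mul_lt_mul_right hp.pos |>.mpr hmp
      rw [hcb] at hble
      omega
    have hb0 : b ≠ 0 := by
      intro h0
      rw [h0, pow_zero] at hcb
      have hsingle : MulAction.orbit ↥K v = {v} := by
        obtain ⟨w, hw⟩ := Set.ncard_eq_one.mp hcb
        have hvmem : v ∈ MulAction.orbit ↥K v := mem_orbit_self v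
        rw [hw] at hvmem ⊢
        rw [Set.mem_singleton_iff] at hvmem
        rw [hvmem]
      have hKle : K ≤ MulAction.stabilizer ↥G v := by
        intro k hk
        have hmem : (⟨k, hk⟩ : ↥K) • v ∈ MulAction.orbit ↥K v := mem_orbit v _
        rw [hsingle, Set.mem_singleton_iff] at hmem
        exact hmem
      obtain ⟨c, hc⟩ := Subgroup.card_dvd_of_le hKle
      have h2 := Subgroup.index_mul_card (MulAction.stabilizer ↥G v)
      rw [hGstab v] at h2
      have hdvd2 : p ^ (a + 1) ∣ Nat.card ↥G := by
        refine ⟨m * c, ?_⟩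
        rw [← h2, hc, hPcard]
        ring
      have hle2 := (Nat.Prime.pow_dvd_iff_le_factorization hp hGpos.ne').mp hdvd2
      rw [← ha] at hle2
      omega
    have hbeq : b = 1 := by omega
    rw [hbeq, pow_one] at hcb
    exact hcb
  have hcount := card_orbitQuotient_mul (P := ↥K) (V := V) horbK
  have hQm : Nat.card (orbitRel.Quotient ↥K V) = m := by
    rw [hV] at hcount
    exact Nat.eq_of_mul_eq_mul_right hp.pos hcount
  have hPgroup : IsPGroup p ↥K := P.isPGroup'
  obtain ⟨g, hgfree⟩ := exists_fixed_point_free hp hPgroup horbK (by rw [hQm]; exact hmp)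
  set ρ : X ≃g X := (((g : ↥G) : X ≃g X)) with hρ
  have hρmem : ρ ∈ G := (g : ↥G).2
  set Z : Subgroup (X ≃g X) := Subgroup.zpowers ρ with hZ
  have hauto : ∀ (N : Subgroup (X ≃g X)) (v : V), X.autOrbit N v = MulAction.orbit ↥N v := by
    intro N v
    ext w
    constructor
    · rintro ⟨h, hhN, hhv⟩
      exact ⟨⟨h, hhN⟩, hhv⟩
    · rintro ⟨⟨h, hhN⟩, hhv⟩
      exact ⟨h, hhN, hhv⟩
  -- ⟨ρ⟩-orbits coincide with K-orbits
  have hρv : ∀ v : V, ρ • v = g • v := fun v => rfl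
  have horbZsub : ∀ v : V, MulAction.orbit ↥Z v ⊆ MulAction.orbit ↥K v := by
    intro v w hw
    obtain ⟨z, hzv⟩ := hw
    obtain ⟨n, hn⟩ := Subgroup.mem_zpowers_iff.mp z.2
    refine ⟨g ^ n, ?_⟩
    show ((g ^ n : ↥K) : ↥G) • v = w
    rw [← hzv]
    show ((g ^ n : ↥K) : ↥G) • v = (z : X ≃g X) • v
    rw [← hn]
    rw [SubgroupClass.coe_zpow]
    show (((g : ↥G) ^ n : ↥G) : X ≃g X) • v = ρ ^ n • v
    rw [SubgroupClass.coe_zpow]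
  have horbZ : ∀ v : V, MulAction.orbit ↥Z v = MulAction.orbit ↥K v := by
    intro v
    refine Set.eq_of_subset_of_ncard_le (horbZsub v) ?_ (Set.toFinite _)
    have hdvdZ : (MulAction.orbit ↥Z v).ncard ∣ Nat.card ↥Z := by
      rw [← MulAction.index_stabilizer]
      exact Subgroup.index_dvd_card _
    have hordZ : ∃ k, Nat.card ↥Z = p ^ k := by
      rw [hZ, Nat.card_zpowers]
      have h1 : orderOf ρ = orderOf g := by
        rw [hρ, Subgroup.orderOf_coe, Subgroup.orderOf_coe]
      obtain ⟨k, hk⟩ := hPgroup g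
      obtain ⟨j, _, hje⟩ := (Nat.dvd_prime_pow hp).mp (orderOf_dvd_of_pow_eq_one hk)
      exact ⟨j, by rw [h1, hje]⟩
    obtain ⟨k, hk⟩ := hordZ
    rw [hk] at hdvdZ
    obtain ⟨c, _, hce⟩ := (Nat.dvd_prime_pow hp).mp hdvdZ
    have h2 : 1 < (MulAction.orbit ↥Z v).ncard := by
      have hmem1 : ρ • v ∈ MulAction.orbit ↥Z v := ⟨⟨ρ, Subgroup.mem_zpowers ρ⟩, rfl⟩
      have hmem2 : v ∈ MulAction.orbit ↥Z v := mem_orbit_self v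
      have hne : ρ • v ≠ v := by rw [hρv]; exact hgfree v
      exact (Set.one_lt_ncard_iff (Set.toFinite _)).mpr ⟨_, _, hmem1, hmem2, hne⟩
    have hc1 : 1 ≤ c := by
      by_contra hc0
      push_neg at hc0
      interval_cases c
      rw [pow_zero] at hce
      omega
    rw [horbK v, hce]
    calc p = p ^ 1 := (pow_one p).symm
      _ ≤ p ^ c := Nat.pow_le_pow_right hp.pos hc1
  refine ⟨ρ, hρmem, ?_, ?_⟩
  · intro v
    rw [show Subgroup.zpowers ρ = Z from rfl, hauto Z v, horbZ v, horbK v]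
  · have hsets : {S : Set V | ∃ v, S = X.autOrbit Z v}
        = Set.range (orbitRel.Quotient.orbit (G := ↥K) (α := V)) := by
      ext S
      constructor
      · rintro ⟨v, rfl⟩
        exact ⟨Quotient.mk'' v, by rw [orbitRel.Quotient.orbit_mk, ← horbZ v, ← hauto Z v]⟩
      · rintro ⟨ω, rfl⟩
        induction ω using Quotient.inductionOn' with
        | h v => exact ⟨v, by rw [orbitRel.Quotient.orbit_mk, ← horbZ v, ← hauto Z v]⟩
    rw [show Subgroup.zpowers ρ = Z from rfl, hsets, ← Nat.card_coe_set_eq,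
      Nat.card_range_of_injective orbitRel.Quotient.orbit_injective, hQm]
end

section
/- Let q be a prime, let X be a vertex-transitive finite simple graph on mq vertices, let G be a transitive subgroup of the automorphism group of X, and let N be a normal subgroup of G all of whose orbits on the vertex set have size q. Then X admits an (m,q)-semiregular automorphism whose orbits coincide with the orbits of N. -/
open SimpleGraph

section MarusicAux

variable {V : Type*} {X : SimpleGraph V} {N : Subgroup (X ≃g X)}

lemma marOrbit_self (v : V) : v ∈ X.autOrbit N v := ⟨1, one_mem N, rfl⟩

lemma marOrbit_eq {u v : V} (h : u ∈ X.autOrbit N v) :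
    X.autOrbit N u = X.autOrbit N v := by
  obtain ⟨g, hg, rfl⟩ := h
  ext w
  constructor
  · rintro ⟨h', hh', rfl⟩
    exact ⟨h' * g, mul_mem hh' hg, rfl⟩
  · rintro ⟨h', hh', rfl⟩
    refine ⟨h' * g⁻¹, mul_mem hh' (inv_mem hg), ?_⟩
    show h' (g⁻¹ (g v)) = h' v
    rw [RelIso.inv_apply_self]

lemma marOrbit_symm {u v : V} (h : u ∈ X.autOrbit N v) : v ∈ X.autOrbit N u := by
  rw [marOrbit_eq h]; exact marOrbit_self v

/-- The subgroup of all automorphisms preserving every `N`-orbit setwise. -/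
def marA (X : SimpleGraph V) (N : Subgroup (X ≃g X)) : Subgroup (X ≃g X) where
  carrier := {g | ∀ v, g v ∈ X.autOrbit N v}
  one_mem' := fun v => marOrbit_self v
  mul_mem' := by
    intro a b ha hb v
    have : (a * b) v = a (b v) := rfl
    rw [this]
    have h1 := ha (b v)
    rwa [marOrbit_eq (hb v)] at h1
  inv_mem' := by
    intro a ha v
    have h := ha (a⁻¹ v)
    rw [RelIso.apply_inv_self] at h
    exact marOrbit_symm h

lemma marN_le_A : N ≤ marA X N := fun n hn v => ⟨n, hn, rfl⟩

lemma marA_maps {g : X ≃g X} (hg : g ∈ marA X N) {v w : V}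
    (h : w ∈ X.autOrbit N v) : g w ∈ X.autOrbit N v := by
  rw [← marOrbit_eq h]; exact hg w

end MarusicAux
section MarusicAux2

variable {V : Type*} {X : SimpleGraph V} {N : Subgroup (X ≃g X)}

lemma marFinite [Fintype V] : Finite (X ≃g X) := by
  classical
  exact Finite.of_injective (fun g => (g : V → V)) DFunLike.coe_injective

/-- Restriction of automorphisms preserving orbits to a permutation of one orbit. -/
def marRes (H : Subgroup (X ≃g X)) (hH : H ≤ marA X N) (v₀ : V) :
    ↥H →* Equiv.Perm ↥(X.autOrbit N v₀) where
  toFun p := Equiv.Perm.subtypePerm (p : X ≃g X).toEquiv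
    (fun x => ⟨fun hx => (marOrbit_eq hx) ▸ (marOrbit_symm (hH p.2 x)),
               fun hx => marA_maps (hH p.2) hx⟩)
  map_one' := by ext x; rfl
  map_mul' := fun a b => by ext x; rfl

lemma marRes_apply {H : Subgroup (X ≃g X)} (hH : H ≤ marA X N) (v₀ : V)
    (p : ↥H) (x : ↥(X.autOrbit N v₀)) :
    ((marRes H hH v₀ p) x : V) = (p : X ≃g X) x := rfl

lemma marQ2 {q : ℕ} (hq : q.Prime) : ¬ (q * q ∣ q.factorial) := by
  intro h
  obtain ⟨n, rfl⟩ : ∃ n, q = n + 1 := ⟨q - 1, by have := hq.pos; omega⟩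
  rw [Nat.factorial_succ] at h
  have h2 : (n+1) ∣ n.factorial := by
    have hpos : (0:ℕ) < n + 1 := Nat.succ_pos n
    have := (mul_dvd_mul_iff_left hpos.ne').mp h
    simpa using this
  have h3 := (hq.dvd_factorial).mp h2
  omega

end MarusicAux2
section MarusicAux3

variable {V : Type*} [Fintype V] {X : SimpleGraph V} {N : Subgroup (X ≃g X)}

lemma marSylow_exists_nonfix {q : ℕ} (hq : q.Prime)
    (horb : ∀ v : V, (X.autOrbit N v).ncard = q)
    (S : Sylow q ↥(marA X N)) (v : V) :
    ∃ p : ↥(marA X N), p ∈ (S : Subgroup ↥(marA X N)) ∧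
      ¬ ∀ w ∈ X.autOrbit N v, (p : X ≃g X) w = w := by
  classical
  haveI := Fact.mk hq
  haveI : Finite (X ≃g X) := marFinite
  by_contra hcon
  push_neg at hcon
  set B := X.autOrbit N v with hB
  let ψ := marRes (marA X N) le_rfl v
  have hker : (S : Subgroup ↥(marA X N)) ≤ ψ.ker := by
    intro s hs
    rw [MonoidHom.mem_ker]
    refine Equiv.ext fun x => Subtype.ext ?_
    exact hcon s hs x.1 x.2
  have hBcard : Nat.card ↥B = q := by
    rw [Nat.card_coe_set_eq]; exact horb v
  have base : ↥B := ⟨v, marOrbit_self v⟩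
  have hq_dvd_range : q ∣ Nat.card ↥ψ.range := by
    letI : MulAction ↥ψ.range ↥B := MulAction.compHom _ ψ.range.subtype
    have horb_univ : MulAction.orbit ↥ψ.range (⟨v, marOrbit_self v⟩ : ↥B) = Set.univ := by
      ext b
      simp only [Set.mem_univ, iff_true]
      obtain ⟨w, g, hgN, hgv⟩ := b
      refine MulAction.mem_orbit_iff.mpr ⟨⟨ψ ⟨g, marN_le_A hgN⟩, ⟨_, rfl⟩⟩, ?_⟩
      exact Subtype.ext hgv
    have hcards : Nat.card ↥B =
        Nat.card (↥ψ.range ⧸ MulAction.stabilizer ↥ψ.range (⟨v, marOrbit_self v⟩ : ↥B)) := by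
      have e := MulAction.orbitEquivQuotientStabilizer ↥ψ.range (⟨v, marOrbit_self v⟩ : ↥B)
      rw [← Nat.card_congr e, horb_univ, Nat.card_congr (Equiv.Set.univ _)]
    rw [← hBcard, hcards]
    exact Subgroup.card_quotient_dvd_card _
  have key : q * Nat.card ↥(S : Subgroup ↥(marA X N)) ∣ Nat.card ↥(marA X N) := by
    rw [Subgroup.card_eq_card_quotient_mul_card_subgroup ψ.ker,
      Nat.card_congr (QuotientGroup.quotientKerEquivRange ψ).toEquiv]
    exact mul_dvd_mul hq_dvd_range (Subgroup.card_dvd_of_le hker)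
  rw [Sylow.card_eq_multiplicity S] at key
  have hA0 : Nat.card ↥(marA X N) ≠ 0 := Nat.card_pos.ne'
  refine Nat.pow_succ_factorization_not_dvd hA0 hq ?_
  rw [pow_succ']
  exact key

end MarusicAux3
section MarusicAux4

variable {V : Type*} [Fintype V] {X : SimpleGraph V} {N : Subgroup (X ≃g X)}

set_option maxHeartbeats 1000000 in
lemma marSylow_cyclic {q : ℕ} (hq : q.Prime)
    (horb : ∀ v : V, (X.autOrbit N v).ncard = q)
    (S : Sylow q ↥(marA X N)) (v : V)
    (p1 : X ≃g X) (hp1S : p1 ∈ Subgroup.map (marA X N).subtype ↑S)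
    (hp1 : ¬ ∀ w ∈ X.autOrbit N v, p1 w = w) :
    (∀ x ∈ Subgroup.map (marA X N).subtype ↑S,
        ∃ k : ℤ, ∀ w ∈ X.autOrbit N v, x w = (p1 ^ k) w) ∧
    (∀ u ∈ X.autOrbit N v, ∀ w ∈ X.autOrbit N v, ∃ k : ℤ, (p1 ^ k) u = w) := by
  classical
  haveI := Fact.mk hq
  haveI : Finite (X ≃g X) := marFinite
  set P := Subgroup.map (marA X N).subtype ↑S with hPdef
  have hPA : P ≤ marA X N := by rintro x ⟨s, hs, rfl⟩; exact s.2
  set B := X.autOrbit N v with hBdef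
  let φ := marRes P hPA v
  have hBcard : Nat.card ↥B = q := by rw [Nat.card_coe_set_eq]; exact horb v
  haveI : Fintype ↥B := Fintype.ofFinite _
  -- φ p1 is nontrivial
  push_neg at hp1
  obtain ⟨w1, hw1B, hw1⟩ := hp1
  have hφp1 : φ ⟨p1, hp1S⟩ ≠ 1 := by
    intro h
    exact hw1 (congrArg Subtype.val (Equiv.ext_iff.mp h ⟨w1, hw1B⟩))
  -- the image of P on B has cardinality exactly q
  have hrange_dvd_P : Nat.card ↥φ.range ∣ Nat.card ↥P := by
    rw [← Nat.card_congr (QuotientGroup.quotientKerEquivRange φ).toEquiv]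
    exact Subgroup.card_quotient_dvd_card _
  have hPcard : Nat.card ↥P = q ^ (Nat.card ↥(marA X N)).factorization q := by
    rw [← Sylow.card_eq_multiplicity S]
    have e := Subgroup.equivMapOfInjective (↑S : Subgroup ↥(marA X N)) (marA X N).subtype
      (Subgroup.subtype_injective _)
    exact (Nat.card_congr e.toEquiv).symm
  obtain ⟨j, hjle, hj⟩ := (Nat.dvd_prime_pow hq).mp (hPcard ▸ hrange_dvd_P)
  have hfact : Nat.card ↥φ.range ∣ Nat.factorial q := by
    have h1 := Subgroup.card_subgroup_dvd_card φ.range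
    have hp : Nat.card (Equiv.Perm ↥B) = Nat.factorial q := by
      rw [Nat.card_eq_fintype_card, Fintype.card_perm, ← Nat.card_eq_fintype_card, hBcard]
    rwa [hp] at h1
  have hcardrange : Nat.card ↥φ.range = q := by
    rcases j with _ | _ | j
    · exfalso
      apply hφp1
      have hbot : φ.range = ⊥ := Subgroup.card_eq_one.mp (by simpa using hj)
      have : φ ⟨p1, hp1S⟩ ∈ φ.range := ⟨_, rfl⟩
      rwa [hbot, Subgroup.mem_bot] at this
    · rw [hj, pow_one]
    · exfalso
      apply marQ2 hq
      refine dvd_trans ?_ (hj ▸ hfact)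
      have : q * q = q ^ 2 := by ring
      rw [this]
      exact pow_dvd_pow q (by omega)
  have hzp : Subgroup.zpowers (φ ⟨p1, hp1S⟩) = φ.range := by
    have hle : Subgroup.zpowers (φ ⟨p1, hp1S⟩) ≤ φ.range := Subgroup.zpowers_le.mpr ⟨_, rfl⟩
    have hdvd : Nat.card ↥(Subgroup.zpowers (φ ⟨p1, hp1S⟩)) ∣ q :=
      hcardrange ▸ Subgroup.card_dvd_of_le hle
    have hne1 : Nat.card ↥(Subgroup.zpowers (φ ⟨p1, hp1S⟩)) ≠ 1 := by
      rw [Nat.card_zpowers]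
      exact fun h => hφp1 (orderOf_eq_one_iff.mp h)
    have hcz : Nat.card ↥(Subgroup.zpowers (φ ⟨p1, hp1S⟩)) = q :=
      ((hq.eq_one_or_self_of_dvd _ hdvd).resolve_left hne1)
    exact Subgroup.eq_of_le_of_card_ge hle (by rw [hcardrange, hcz])
  constructor
  · intro x hx
    have hmem : φ ⟨x, hx⟩ ∈ Subgroup.zpowers (φ ⟨p1, hp1S⟩) := hzp ▸ ⟨_, rfl⟩
    obtain ⟨k, hk⟩ := Subgroup.mem_zpowers_iff.mp hmem
    refine ⟨k, fun w hw => ?_⟩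
    have h1 : φ ((⟨p1, hp1S⟩ : ↥P) ^ k) ⟨w, hw⟩ = φ ⟨x, hx⟩ ⟨w, hw⟩ := by
      rw [map_zpow, hk]
    have h2 := congrArg Subtype.val h1
    rw [marRes_apply, marRes_apply] at h2
    rw [← h2]
    norm_cast
  · intro u hu w hw
    letI : MulAction ↥φ.range ↥B := MulAction.compHom _ φ.range.subtype
    obtain ⟨b1, hb1⟩ : ∃ b1 : ↥B, φ ⟨p1, hp1S⟩ b1 ≠ b1 := by
      by_contra hno
      push_neg at hno
      exact hφp1 (Equiv.ext fun x => hno x)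
    have hσb1 : (⟨φ ⟨p1, hp1S⟩, ⟨_, rfl⟩⟩ : ↥φ.range) • b1 ≠ b1 := hb1
    have horb_dvd : (MulAction.orbit ↥φ.range b1).ncard ∣ q := by
      rw [← Nat.card_coe_set_eq,
        Nat.card_congr (MulAction.orbitEquivQuotientStabilizer ↥φ.range b1), ← hcardrange]
      exact Subgroup.card_quotient_dvd_card _
    have horb_ne1 : (MulAction.orbit ↥φ.range b1).ncard ≠ 1 := by
      intro h1
      obtain ⟨a, ha⟩ := Set.ncard_eq_one.mp h1
      have h2 : b1 ∈ MulAction.orbit ↥φ.range b1 := MulAction.mem_orbit_self b1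
      have h3 := MulAction.mem_orbit b1 (⟨φ ⟨p1, hp1S⟩, ⟨_, rfl⟩⟩ : ↥φ.range)
      rw [ha, Set.mem_singleton_iff] at h2 h3
      exact hσb1 (h3.trans h2.symm)
    have horb_univ : MulAction.orbit ↥φ.range b1 = Set.univ := by
      have hcard_orbit : (MulAction.orbit ↥φ.range b1).ncard = q :=
        (hq.eq_one_or_self_of_dvd _ horb_dvd).resolve_left horb_ne1
      refine Set.eq_of_subset_of_ncard_le (Set.subset_univ _) ?_ Set.finite_univ
      rw [Set.ncard_univ, hBcard, hcard_orbit]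
    have hu' : (⟨u, hu⟩ : ↥B) ∈ MulAction.orbit ↥φ.range b1 := by rw [horb_univ]; trivial
    have hw' : (⟨w, hw⟩ : ↥B) ∈ MulAction.orbit ↥φ.range b1 := by rw [horb_univ]; trivial
    have hmem : (⟨w, hw⟩ : ↥B) ∈ MulAction.orbit ↥φ.range (⟨u, hu⟩ : ↥B) := by
      have heq : MulAction.orbit ↥φ.range (⟨u, hu⟩ : ↥B) = MulAction.orbit ↥φ.range b1 :=
        (MulAction.orbit_eq_iff (G := ↥φ.range)).mpr hu'
      rw [heq]; exact hw'
    obtain ⟨σ, hσ⟩ := hmem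
    have hσz : (σ : Equiv.Perm ↥B) ∈ Subgroup.zpowers (φ ⟨p1, hp1S⟩) := by
      rw [hzp]; exact σ.2
    obtain ⟨k, hk⟩ := Subgroup.mem_zpowers_iff.mp hσz
    refine ⟨k, ?_⟩
    have h1 : φ ((⟨p1, hp1S⟩ : ↥P) ^ k) ⟨u, hu⟩ = ⟨w, hw⟩ := by
      rw [map_zpow, hk]
      exact hσ
    have h2 := congrArg Subtype.val h1
    rw [marRes_apply] at h2
    have h4 : (((⟨p1, hp1S⟩ : ↥P) ^ k : ↥P) : X ≃g X) = p1 ^ k := by norm_cast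
    rw [h4] at h2
    exact h2

end MarusicAux4
section MarusicAux5

variable {V : Type*} {X : SimpleGraph V}

/-- The pointwise fixer of a set of vertices. -/
def marFixer (X : SimpleGraph V) (B : Set V) : Subgroup (X ≃g X) where
  carrier := {g | ∀ w ∈ B, g w = w}
  one_mem' := fun _ _ => rfl
  mul_mem' := by
    intro a b ha hb w hw
    show a (b w) = w
    rw [hb w hw, ha w hw]
  inv_mem' := by
    intro a ha w hw
    conv_lhs => rw [← ha w hw]
    exact RelIso.inv_apply_self a w

lemma marFixer_zpow {B : Set V} {g : X ≃g X} (hg : ∀ w ∈ B, g w = w) (k : ℤ) :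
    ∀ w ∈ B, (g ^ k) w = w := by
  have : g ∈ marFixer X B := hg
  exact zpow_mem this k

end MarusicAux5
set_option maxHeartbeats 1000000 in
theorem exists_semiregular_matching_normal_orbits
    {V : Type*} [Fintype V] (q m : ℕ) (hq : q.Prime)
    (X : SimpleGraph V) (hcard : Fintype.card V = m * q)
    (hvt : X.IsVertexTransitive)
    (G : Subgroup (X ≃g X)) (hG : X.IsTransitiveSubgroup G)
    (N : Subgroup (X ≃g X)) (hN : X.IsNormalIn N G)
    (horb : ∀ v : V, (X.autOrbit N v).ncard = q) :
    ∃ ρ : X ≃g X, X.IsSemiregular ρ m q ∧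
      ∀ v : V, X.autOrbit (Subgroup.zpowers ρ) v = X.autOrbit N v := by
  classical
  haveI := Fact.mk hq
  haveI : Finite (X ≃g X) := marFinite
  obtain ⟨S⟩ : Nonempty (Sylow q ↥(marA X N)) := inferInstance
  set P : Subgroup (X ≃g X) := Subgroup.map (marA X N).subtype ↑S with hPdef
  have hPA : P ≤ marA X N := by rintro x ⟨s, hs, rfl⟩; exact s.2
  -- the equivalence relation on V : same fixing behaviour of the blocks under P
  let R : V → V → Prop := fun u v => ∀ p ∈ P,
    ((∀ w ∈ X.autOrbit N u, p w = w) ↔ (∀ w ∈ X.autOrbit N v, p w = w))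
  let E : Setoid V := ⟨R, ⟨fun _ _ _ => Iff.rfl, fun h p hp => (h p hp).symm,
    fun h1 h2 p hp => (h1 p hp).trans (h2 p hp)⟩⟩
  let rep : V → V := fun v => (Quotient.mk E v).out
  have hrep_rel : ∀ v, R (rep v) v := by
    intro v
    exact Quotient.exact (Quotient.out_eq (Quotient.mk E v))
  have hrep_eq : ∀ u v : V, R u v → rep u = rep v := by
    intro u v h
    show (Quotient.mk E u).out = (Quotient.mk E v).out
    rw [Quotient.sound (h : E.r u v)]
  -- choose a non-fixing element of P for each class
  have hex : ∀ v : V, ∃ p : X ≃g X, p ∈ P ∧ ¬ ∀ w ∈ X.autOrbit N v, p w = w := by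
    intro v
    obtain ⟨p, hpS, hnf⟩ := marSylow_exists_nonfix hq horb S v
    exact ⟨(p : X ≃g X), ⟨p, hpS, rfl⟩, hnf⟩
  choose pc hpcP hpcnf using hex
  let pv : V → (X ≃g X) := fun v => pc (rep v)
  have hpvP : ∀ v, pv v ∈ P := fun v => hpcP (rep v)
  have hpvA : ∀ v, pv v ∈ marA X N := fun v => hPA (hpvP v)
  have hpvnf : ∀ v, ¬ ∀ w ∈ X.autOrbit N v, pv v w = w := by
    intro v hfix
    exact hpcnf (rep v) ((hrep_rel v (pv v) (hpvP v)).mpr hfix)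
  have hpv_eqcl : ∀ u v : V, R u v → pv u = pv v := by
    intro u v h
    show pc (rep u) = pc (rep v)
    rw [hrep_eq u v h]
  have horbR : ∀ {u v : V}, u ∈ X.autOrbit N v → R u v := by
    intro u v h p _
    rw [marOrbit_eq h]
  have hpv_orbit : ∀ v w, w ∈ X.autOrbit N v → pv w = pv v :=
    fun v w h => hpv_eqcl w v (horbR h)
  -- the semiregular automorphism
  let ρfun : V → V := fun v => pv v v
  let ρinv : V → V := fun v => (pv v)⁻¹ v
  have hρmem : ∀ v, ρfun v ∈ X.autOrbit N v := fun v => (hpvA v) v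
  have hinvmem : ∀ v, ρinv v ∈ X.autOrbit N v := fun v => (inv_mem (hpvA v)) v
  have hli : ∀ v, ρinv (ρfun v) = v := by
    intro v
    show (pv (ρfun v))⁻¹ (ρfun v) = v
    rw [hpv_orbit v (ρfun v) (hρmem v)]
    exact RelIso.inv_apply_self (pv v) v
  have hri : ∀ v, ρfun (ρinv v) = v := by
    intro v
    show pv (ρinv v) (ρinv v) = v
    rw [hpv_orbit v (ρinv v) (hinvmem v)]
    exact RelIso.apply_inv_self (pv v) v
  -- crossing lemma
  have hcross : ∀ a b : V, ∀ p1, p1 ∈ P → (∀ w ∈ X.autOrbit N a, p1 w = w) →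
      (¬ ∀ w ∈ X.autOrbit N b, p1 w = w) →
      ∃ c : X ≃g X, c a = pv a a ∧ c b = pv b b := by
    intro a b p1 hp1P hfixa hnfixb
    have hbc := (marSylow_cyclic hq horb S b p1 hp1P hnfixb).1
    obtain ⟨k, hk⟩ := hbc ((pv b) * (pv a)⁻¹) (mul_mem (hpvP b) (inv_mem (hpvP a)))
    refine ⟨p1 ^ k * pv a, ?_, ?_⟩
    · show (p1 ^ k) (pv a a) = pv a a
      exact marFixer_zpow hfixa k (pv a a) ((hpvA a) a)
    · show (p1 ^ k) (pv a b) = pv b b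
      have h1 : pv a b ∈ X.autOrbit N b := marA_maps (hpvA a) (marOrbit_self b)
      have h2 := hk (pv a b) h1
      rw [← h2]
      show pv b ((pv a)⁻¹ (pv a b)) = pv b b
      rw [RelIso.inv_apply_self]
  have hadj : ∀ a b : V, X.Adj (ρfun a) (ρfun b) ↔ X.Adj a b := by
    intro a b
    show X.Adj (pv a a) (pv b b) ↔ X.Adj a b
    by_cases hE : R a b
    · rw [show pv a = pv b from hpv_eqcl a b hE]
      exact (pv b).map_rel_iff
    · simp only [R, not_forall] at hE
      obtain ⟨p1, hp1P, hmis⟩ := hE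
      by_cases hfa : ∀ w ∈ X.autOrbit N a, p1 w = w
      · by_cases hfb : ∀ w ∈ X.autOrbit N b, p1 w = w
        · exact absurd (iff_of_true hfa hfb) hmis
        · obtain ⟨c, hc1, hc2⟩ := hcross a b p1 hp1P hfa hfb
          rw [← hc1, ← hc2]
          exact c.map_rel_iff
      · by_cases hfb : ∀ w ∈ X.autOrbit N b, p1 w = w
        · obtain ⟨c, hc2, hc1⟩ := hcross b a p1 hp1P hfb hfa
          rw [← hc1, ← hc2]
          exact c.map_rel_iff
        · exact absurd (iff_of_false hfa hfb) hmis
  let ρ : X ≃g X := ⟨⟨ρfun, ρinv, hli, hri⟩, @fun a b => hadj a b⟩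
  -- powers of ρ act as powers of pv
  have hρA : ρ ∈ marA X N := fun v => hρmem v
  have hzpA : Subgroup.zpowers ρ ≤ marA X N := Subgroup.zpowers_le.mpr hρA
  have hρpow : ∀ (k : ℤ) (v : V), (ρ ^ k) v = ((pv v) ^ k) v := by
    intro k
    induction k using Int.induction_on with
    | zero => intro v; rfl
    | succ n ih =>
      intro v
      have hw : ρ v ∈ X.autOrbit N v := hρA v
      calc (ρ ^ ((n : ℤ) + 1)) v = (ρ ^ (n : ℤ)) (ρ v) := by
            rw [zpow_add_one]; rfl
        _ = (pv (ρ v) ^ (n : ℤ)) (ρ v) := ih (ρ v)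
        _ = (pv v ^ (n : ℤ)) (pv v v) := by rw [hpv_orbit v (ρ v) hw]; rfl
        _ = (pv v ^ ((n : ℤ) + 1)) v := by rw [zpow_add_one]; rfl
    | pred n ih =>
      intro v
      have hw : ρ⁻¹ v ∈ X.autOrbit N v := (inv_mem hρA) v
      have hinv_apply : ρ⁻¹ v = (pv v)⁻¹ v := rfl
      calc (ρ ^ (-(n : ℤ) - 1)) v = (ρ ^ (-(n : ℤ))) (ρ⁻¹ v) := by
            rw [zpow_sub_one]; rfl
        _ = (pv (ρ⁻¹ v) ^ (-(n : ℤ))) (ρ⁻¹ v) := ih (ρ⁻¹ v)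
        _ = (pv v ^ (-(n : ℤ))) ((pv v)⁻¹ v) := by rw [hpv_orbit v (ρ⁻¹ v) hw, hinv_apply]
        _ = (pv v ^ (-(n : ℤ) - 1)) v := by rw [zpow_sub_one]; rfl
  -- orbits of ρ coincide with the orbits of N
  have horbits : ∀ v, X.autOrbit (Subgroup.zpowers ρ) v = X.autOrbit N v := by
    intro v
    ext w
    constructor
    · rintro ⟨g, hg, rfl⟩
      exact (hzpA hg) v
    · intro hw
      obtain ⟨k, hk⟩ := (marSylow_cyclic hq horb S v (pv v) (hpvP v) (hpvnf v)).2
        v (marOrbit_self v) w hw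
      exact ⟨ρ ^ k, Subgroup.zpow_mem_zpowers ρ k, by rw [hρpow k v]; exact hk⟩
  -- counting the orbits
  have hcount : {T : Set V | ∃ v, T = X.autOrbit N v}.ncard = m := by
    set 𝒪 : Set (Set V) := {T : Set V | ∃ v, T = X.autOrbit N v} with h𝒪
    have hfin : 𝒪.Finite := Set.toFinite _
    have hdisj : ∀ s ∈ hfin.toFinset, ∀ t ∈ hfin.toFinset, s ≠ t →
        Disjoint s.toFinset t.toFinset := by
      rintro s hs t ht hst
      rw [Set.Finite.mem_toFinset] at hs ht
      obtain ⟨u, rfl⟩ := hs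
      obtain ⟨v, rfl⟩ := ht
      rw [Finset.disjoint_left]
      intro x hxu hxv
      rw [Set.mem_toFinset] at hxu hxv
      exact hst (by rw [← marOrbit_eq hxu, ← marOrbit_eq hxv])
    have hcover : (Finset.univ : Finset V) = hfin.toFinset.biUnion (fun s => s.toFinset) := by
      ext x
      simp only [Finset.mem_univ, true_iff, Finset.mem_biUnion]
      exact ⟨X.autOrbit N x, by rw [Set.Finite.mem_toFinset]; exact ⟨x, rfl⟩,
        by rw [Set.mem_toFinset]; exact marOrbit_self x⟩
    have hsum : Fintype.card V = ∑ s ∈ hfin.toFinset, s.toFinset.card := by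
      rw [← Finset.card_biUnion hdisj, ← hcover, Finset.card_univ]
    have hconst : ∀ s ∈ hfin.toFinset, s.toFinset.card = q := by
      intro s hs
      rw [Set.Finite.mem_toFinset] at hs
      obtain ⟨v, rfl⟩ := hs
      rw [← Set.ncard_eq_toFinset_card']
      exact horb v
    rw [Finset.sum_congr rfl hconst, Finset.sum_const, smul_eq_mul] at hsum
    rw [hcard] at hsum
    have hm : hfin.toFinset.card = m := by
      have := Nat.eq_of_mul_eq_mul_right hq.pos hsum.symm
      exact this
    rw [Set.ncard_eq_toFinset_card 𝒪 hfin]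
    exact hm
  refine ⟨ρ, ⟨fun v => by rw [horbits v]; exact horb v, ?_⟩, horbits⟩
  have hsetseq : {T : Set V | ∃ v, T = X.autOrbit (Subgroup.zpowers ρ) v}
      = {T : Set V | ∃ v, T = X.autOrbit N v} := by
    ext s
    constructor
    · rintro ⟨v, rfl⟩
      exact ⟨v, horbits v⟩
    · rintro ⟨v, rfl⟩
      exact ⟨v, (horbits v).symm⟩
  rw [hsetseq]
  exact hcount
end

section
/- Let p be a prime and let X be a finite simple graph admitting an (m,p)-semiregular automorphism ρ with orbit set S, and let C = S_1 S_2 ... S_k S_1 be a cycle of length k in the quotient graph X_S. Then either X contains a cycle of length kp whose vertices lie in S_1 ∪ ... ∪ S_k and visit the orbits in the cyclic pattern S_1, S_2, ..., S_k repeated p times, or the spanning subgraph of X on S_1 ∪ ... ∪ S_k whose edges are exactly the edges of X joining consecutive orbits S_i and S_{i+1} (indices mod k) is a disjoint union of p cycles of length k; moreover, in the latter case, for every edge S_iS_{i+1} of C each vertex of S_i has exactly one neighbour in S_{i+1}. -/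
open SimpleGraph

/-- The set `U` is a disjoint union of `p` cycles of length `k` of the graph `Y`,
in the sense that there are `p` pairwise vertex-disjoint `k`-cycles of `Y` covering `U`
and using every edge of `Y`. -/
def SimpleGraph.IsDisjointUnionOfCycles {V : Type*} (Y : SimpleGraph V) (U : Set V)
    (p k : ℕ) : Prop :=
  ∃ c : Fin p → ZMod k → V,
    (∀ a, Function.Injective (c a)) ∧
    (∀ a j, Y.Adj (c a j) (c a (j + 1))) ∧
    (Pairwise fun a b => Disjoint (Set.range (c a)) (Set.range (c b))) ∧
    (⋃ a, Set.range (c a)) = U ∧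
    (∀ u v, Y.Adj u v → ∃ a j, (c a j = u ∧ c a (j + 1) = v) ∨ (c a j = v ∧ c a (j + 1) = u))

section
variable {V : Type*} {X : SimpleGraph V} (ρ : X ≃g X)


private lemma aux_pw_add (m n : ℤ) (v : V) : (ρ ^ (m + n)) v = (ρ ^ m) ((ρ ^ n) v) := by
  rw [zpow_add]; rfl

private lemma aux_pw_congr {m n : ℤ} (h : m = n) (v : V) : (ρ ^ m) v = (ρ ^ n) v := by rw [h]

private lemma aux_pw_inj (m : ℤ) {v w : V} (h : (ρ ^ m) v = (ρ ^ m) w) : v = w :=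
  (ρ ^ m).toEquiv.injective h

private lemma aux_pw_shift {m n : ℤ} {v w : V} (h : (ρ ^ m) v = (ρ ^ n) w) :
    v = (ρ ^ (n - m)) w := by
  apply aux_pw_inj ρ m
  rw [h, ← aux_pw_add]
  exact aux_pw_congr ρ (by ring) w

private lemma aux_fix_zpow {σ : X ≃g X} {v : V} (h : σ v = v) (q : ℤ) : (σ ^ q) v = v := by
  induction q using Int.induction_on with
  | zero => rfl
  | succ n ih =>
      rw [zpow_add, RelIso.mul_apply, zpow_one, h, ih]
  | pred n ih =>
      have h' : (σ ^ (-1 : ℤ)) v = v := by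
        rw [zpow_neg_one]
        conv_lhs => rw [← h]
        exact σ.symm_apply_apply v
      rw [show (-(n:ℤ) - 1) = (-(n:ℤ)) + (-1) from by ring, aux_pw_add, h', ih]

private lemma aux_mem_autOrbit_iff (v w : V) :
    w ∈ X.autOrbit (Subgroup.zpowers ρ) v ↔ ∃ n : ℤ, (ρ ^ n) v = w := by
  constructor
  · rintro ⟨g, hg, rfl⟩
    obtain ⟨n, rfl⟩ := Subgroup.mem_zpowers_iff.mp hg
    exact ⟨n, rfl⟩
  · rintro ⟨n, rfl⟩
    exact ⟨ρ ^ n, Subgroup.zpow_mem_zpowers ρ n, rfl⟩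

private lemma aux_period {p : ℕ} [Fintype V]
    (hρ1 : ∀ v, (X.autOrbit (Subgroup.zpowers ρ) v).ncard = p) (v : V) (n : ℤ) :
    (ρ ^ n) v = v ↔ (p : ℤ) ∣ n := by
  classical
  have hex : ∃ d : ℕ, 0 < d ∧ (ρ ^ (d : ℤ)) v = v := by
    have : ¬ Function.Injective (fun i : Fin (Fintype.card V + 1) => (ρ ^ (i : ℤ)) v) := by
      intro hinj
      have := Fintype.card_le_of_injective _ hinj
      simp at this
    rw [Function.not_injective_iff] at this
    obtain ⟨i, j, hij, hne⟩ := this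
    rcases Ne.lt_or_gt hne with h | h
    · refine ⟨j - i, by omega, ?_⟩
      apply aux_pw_inj ρ (i : ℤ)
      rw [← aux_pw_add, aux_pw_congr ρ (show (i:ℤ) + ((j - i : ℕ) : ℤ) = ((j:ℕ):ℤ) from by
        push_cast; omega) v]
      exact hij.symm
    · refine ⟨i - j, by omega, ?_⟩
      apply aux_pw_inj ρ (j : ℤ)
      rw [← aux_pw_add, aux_pw_congr ρ (show (j:ℤ) + ((i - j : ℕ) : ℤ) = ((i:ℕ):ℤ) from by
        push_cast; omega) v]
      exact hij
  obtain ⟨d, hd0, hdfix, hmin⟩ : ∃ d : ℕ, 0 < d ∧ (ρ ^ (d : ℤ)) v = v ∧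
      ∀ e : ℕ, 0 < e → (ρ ^ (e : ℤ)) v = v → d ≤ e :=
    ⟨Nat.find hex, (Nat.find_spec hex).1, (Nat.find_spec hex).2,
      fun e h1 h2 => Nat.find_le ⟨h1, h2⟩⟩
  have hfixmul : ∀ q : ℤ, (ρ ^ ((d : ℤ) * q)) v = v := by
    intro q
    have := aux_fix_zpow hdfix q
    rwa [← zpow_mul] at this
  have hsplit : ∀ n : ℤ, (ρ ^ n) v = (ρ ^ (n % (d : ℤ))) v := by
    intro n
    rw [aux_pw_congr ρ (show n = n % (d:ℤ) + (d:ℤ) * (n / d) from by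
      rw [Int.emod_def]; ring) v, aux_pw_add, hfixmul]
  have hdchar : ∀ n : ℤ, (ρ ^ n) v = v ↔ (d : ℤ) ∣ n := by
    intro n
    constructor
    · intro hfix
      have hr0 : 0 ≤ n % (d : ℤ) := Int.emod_nonneg n (by exact_mod_cast hd0.ne')
      have hrd : n % (d : ℤ) < d := Int.emod_lt_of_pos n (by exact_mod_cast hd0)
      have hfixr : (ρ ^ (n % (d : ℤ))) v = v := (hsplit n).symm.trans hfix
      by_contra hnd
      have hrne : n % (d : ℤ) ≠ 0 := fun h0 => hnd (Int.dvd_of_emod_eq_zero h0)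
      have hle := hmin (n % (d : ℤ)).toNat (by omega)
        (by rw [Int.toNat_of_nonneg hr0]; exact hfixr)
      omega
    · rintro ⟨q, rfl⟩
      exact hfixmul q
  have horb : (X.autOrbit (Subgroup.zpowers ρ) v).ncard = d := by
    have hrange : X.autOrbit (Subgroup.zpowers ρ) v =
        Set.range (fun i : Fin d => (ρ ^ (i : ℤ)) v) := by
      ext w
      rw [aux_mem_autOrbit_iff]
      constructor
      · rintro ⟨n, rfl⟩
        have hr0 : 0 ≤ n % (d : ℤ) := Int.emod_nonneg n (by exact_mod_cast hd0.ne')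
        have hrd : n % (d : ℤ) < d := Int.emod_lt_of_pos n (by exact_mod_cast hd0)
        refine ⟨⟨(n % (d : ℤ)).toNat, by omega⟩, ?_⟩
        show (ρ ^ (((n % (d:ℤ)).toNat : ℤ))) v = (ρ ^ n) v
        rw [Int.toNat_of_nonneg hr0]
        exact (hsplit n).symm
      · rintro ⟨i, rfl⟩
        exact ⟨(i : ℤ), rfl⟩
    rw [hrange, ← Nat.card_coe_set_eq, Nat.card_range_of_injective, Nat.card_eq_fintype_card,
      Fintype.card_fin]
    intro i j hij
    simp only at hij
    have hfx : (ρ ^ ((i : ℤ) - j)) v = v := by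
      apply aux_pw_inj ρ (j : ℤ)
      rw [← aux_pw_add, aux_pw_congr ρ (show (j:ℤ) + ((i:ℤ) - j) = (i:ℤ) from by ring) v]
      exact hij
    have hdvd := (hdchar _).mp hfx
    have := Int.eq_zero_of_abs_lt_dvd hdvd (by
      have hi : (i : ℤ) < d := by exact_mod_cast i.2
      have hj : (j : ℤ) < d := by exact_mod_cast j.2
      rw [abs_lt]; omega)
    exact Fin.ext (by omega)
  have hdp : d = p := by rw [← horb, hρ1 v]
  rw [hdchar, hdp]
end



section
variable {V : Type*} {X : SimpleGraph V} (ρ : X ≃g X) {p : ℕ} [NeZero p]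

private def auxTau (e : ZMod p) (v : V) : V := (ρ ^ (e.val : ℤ)) v

variable (hper : ∀ (v : V) (n : ℤ), (ρ ^ n) v = v ↔ (p : ℤ) ∣ n)
include hper

private lemma aux_pw_congr_mod {m n : ℤ} (h : (m : ZMod p) = (n : ZMod p)) (v : V) :
    (ρ ^ m) v = (ρ ^ n) v := by
  have hd : (p : ℤ) ∣ m - n := by
    rwa [← ZMod.intCast_zmod_eq_zero_iff_dvd, Int.cast_sub, sub_eq_zero]
  rw [aux_pw_congr ρ (show m = n + (m - n) from by ring) v, aux_pw_add,
    (hper v (m - n)).mpr hd]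

private lemma aux_tau_intCast (n : ℤ) (v : V) : auxTau ρ ((n : ZMod p)) v = (ρ ^ n) v := by
  unfold auxTau
  apply aux_pw_congr_mod ρ hper
  simp [ZMod.natCast_val, ZMod.intCast_cast, ZMod.cast_id]

private lemma aux_tau_add (e f : ZMod p) (v : V) :
    auxTau ρ (e + f) v = auxTau ρ e (auxTau ρ f v) := by
  unfold auxTau
  rw [← aux_pw_add]
  apply aux_pw_congr_mod ρ hper
  push_cast [ZMod.natCast_val, ZMod.cast_id]
  ring

private lemma aux_tau_inj {e f : ZMod p} {v : V} (h : auxTau ρ e v = auxTau ρ f v) : e = f := by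
  unfold auxTau at h
  have hfx : (ρ ^ ((e.val : ℤ) - (f.val : ℤ))) v = v := by
    apply aux_pw_inj ρ ((f.val : ℤ))
    rw [← aux_pw_add, aux_pw_congr ρ (show (f.val:ℤ) + ((e.val:ℤ) - f.val) = (e.val:ℤ) from by
      ring) v]
    exact h
  have := (hper v _).mp hfx
  have h2 : ((e.val : ℤ) : ZMod p) = ((f.val : ℤ) : ZMod p) := by
    rw [← sub_eq_zero, ← Int.cast_sub, ZMod.intCast_zmod_eq_zero_iff_dvd]
    exact this
  simpa [ZMod.natCast_val, ZMod.cast_id] using h2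

omit [NeZero p] hper in
private lemma aux_tau_mem (e : ZMod p) (v : V) :
    auxTau ρ e v ∈ X.autOrbit (Subgroup.zpowers ρ) v :=
  ⟨ρ ^ ((e.val : ℤ)), Subgroup.zpow_mem_zpowers ρ _, rfl⟩

private lemma aux_mem_iff_tau (v w : V) :
    w ∈ X.autOrbit (Subgroup.zpowers ρ) v ↔ ∃ e : ZMod p, auxTau ρ e v = w := by
  constructor
  · rintro ⟨g, hg, rfl⟩
    obtain ⟨n, rfl⟩ := Subgroup.mem_zpowers_iff.mp hg
    exact ⟨(n : ZMod p), aux_tau_intCast ρ hper n v⟩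
  · rintro ⟨e, rfl⟩
    exact aux_tau_mem ρ e v

omit [NeZero p] hper in
private lemma aux_orbit_eq_of_mem {v w : V} (h : w ∈ X.autOrbit (Subgroup.zpowers ρ) v) :
    X.autOrbit (Subgroup.zpowers ρ) w = X.autOrbit (Subgroup.zpowers ρ) v := by
  obtain ⟨g, hg, rfl⟩ := h
  obtain ⟨n, rfl⟩ := Subgroup.mem_zpowers_iff.mp hg
  ext u
  constructor
  · rintro ⟨g', hg', rfl⟩
    obtain ⟨m, rfl⟩ := Subgroup.mem_zpowers_iff.mp hg'
    exact ⟨ρ ^ (m + n), Subgroup.zpow_mem_zpowers ρ _, aux_pw_add ρ m n v⟩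
  · rintro ⟨g', hg', rfl⟩
    obtain ⟨m, rfl⟩ := Subgroup.mem_zpowers_iff.mp hg'
    refine ⟨ρ ^ (m - n), Subgroup.zpow_mem_zpowers ρ _, ?_⟩
    rw [← aux_pw_add]
    exact aux_pw_congr ρ (by ring) v

private lemma aux_adj_shift (e f : ZMod p) (u v : V) :
    X.Adj (auxTau ρ e u) (auxTau ρ f v) ↔ X.Adj u (auxTau ρ (f - e) v) := by
  have h : auxTau ρ f v = auxTau ρ e (auxTau ρ (f - e) v) := by
    rw [← aux_tau_add ρ hper]; congr 1; ring
  rw [h]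
  unfold auxTau
  exact (ρ ^ ((e.val : ℤ))).map_adj_iff

end

section sums
variable {k : ℕ} [NeZero k] {M : Type*} [AddCommMonoid M]

private lemma aux_sum_shift (a : ZMod k → M) (n : ℕ) :
    ∑ t ∈ Finset.range k, a ((n + t : ℕ) : ZMod k) = ∑ i : ZMod k, a i := by
  rw [← Fin.sum_univ_eq_sum_range (fun t => a ((n + t : ℕ) : ZMod k)) k]
  apply Fintype.sum_bijective (fun t : Fin k => ((n + (t : ℕ) : ℕ) : ZMod k))
  · rw [Fintype.bijective_iff_injective_and_card]
    refine ⟨fun t t' htt => ?_, by simp [ZMod.card]⟩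
    have : ((t : ℕ) : ZMod k) = ((t' : ℕ) : ZMod k) := by
      have := htt
      push_cast at this ⊢
      exact add_left_cancel this
    have h1 := congrArg ZMod.val this
    rw [ZMod.val_cast_of_lt t.2, ZMod.val_cast_of_lt t'.2] at h1
    exact Fin.ext h1
  · intro t; rfl

private lemma aux_P_add_mul (a : ZMod k → M) (n t : ℕ) :
    (∑ r ∈ Finset.range (n + k * t), a (r : ZMod k)) =
      (∑ r ∈ Finset.range n, a (r : ZMod k)) + t • (∑ i : ZMod k, a i) := by
  induction t with
  | zero => simp
  | succ t ih =>
      rw [show n + k * (t + 1) = (n + k * t) + k from by ring, Finset.sum_range_add, ih,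
        succ_nsmul, aux_sum_shift (fun i => a i) (n + k * t), add_assoc]

end sums

theorem lift_of_cycle_in_quotient
    {V : Type*} [Fintype V] (p m k : ℕ) (hp : p.Prime) (hk : 3 ≤ k)
    (X : SimpleGraph V) (ρ : X ≃g X) (hρ : X.IsSemiregular ρ m p)
    (S : ZMod k → Set V)
    (hSorb : ∀ i, ∃ v, S i = X.autOrbit (Subgroup.zpowers ρ) v)
    (hSinj : Function.Injective S)
    (hSadj : ∀ i : ZMod k, ∃ u ∈ S i, ∃ v ∈ S (i + 1), X.Adj u v) :
    (∃ c : ZMod (k * p) → V, Function.Injective c ∧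
        (∀ j, X.Adj (c j) (c (j + 1))) ∧
        (∀ j, c j ∈ S (ZMod.castHom (dvd_mul_right k p) (ZMod k) j))) ∨
      ((SimpleGraph.fromRel fun u v =>
            X.Adj u v ∧ ∃ i : ZMod k, u ∈ S i ∧ v ∈ S (i + 1)).IsDisjointUnionOfCycles
          (⋃ i, S i) p k ∧
        ∀ i : ZMod k, ∀ u ∈ S i, {w ∈ S (i + 1) | X.Adj u w}.ncard = 1) := by
  classical
  haveI : Fact p.Prime := ⟨hp⟩
  haveI : NeZero p := ⟨hp.ne_zero⟩
  haveI : NeZero k := ⟨by omega⟩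
  haveI : NeZero (k * p) := ⟨Nat.mul_ne_zero (by omega) hp.ne_zero⟩
  have hper : ∀ (v : V) (n : ℤ), (ρ ^ n) v = v ↔ (p : ℤ) ∣ n := aux_period ρ hρ.1
  choose x hx using hSorb
  have hxmem : ∀ (i : ZMod k) (e : ZMod p), auxTau ρ e (x i) ∈ S i := by
    intro i e; rw [hx]; exact aux_tau_mem ρ e (x i)
  have hmemS : ∀ (i : ZMod k) (u : V), u ∈ S i → ∃ e : ZMod p, auxTau ρ e (x i) = u := by
    intro i u hu
    rw [hx i] at hu
    exact (aux_mem_iff_tau ρ hper (x i) u).mp hu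
  have hdisj : ∀ i j : ZMod k, ∀ w : V, w ∈ S i → w ∈ S j → i = j := by
    intro i j w hi hj
    apply hSinj
    rw [hx i] at hi
    rw [hx j] at hj
    rw [hx i, hx j]
    exact (aux_orbit_eq_of_mem ρ hi).symm.trans (aux_orbit_eq_of_mem ρ hj)
  have hone : (1 : ZMod k) ≠ 0 := by
    have : ((1 : ℕ) : ZMod k) ≠ ((0 : ℕ) : ZMod k) := by
      rw [Ne, ZMod.natCast_eq_natCast_iff]
      intro h
      have := Nat.ModEq.eq_of_lt_of_lt h (by omega) (by omega)
      omega
    simpa using this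
  have hsucc : ∀ i : ZMod k, i ≠ i + 1 := by
    intro i h
    exact hone (by linear_combination -h)
  -- nonempty adjacency shift sets
  have hA : ∀ i : ZMod k, ∃ z : ZMod p, X.Adj (x i) (auxTau ρ z (x (i + 1))) := by
    intro i
    obtain ⟨u, hu, w, hw, huw⟩ := hSadj i
    obtain ⟨e, rfl⟩ := hmemS i u hu
    obtain ⟨f, rfl⟩ := hmemS (i + 1) w hw
    exact ⟨f - e, (aux_adj_shift ρ hper e f _ _).mp huw⟩
  choose a ha using hA
  -- edge characterisations
  have hedge' : ∀ (i : ZMod k) (e z : ZMod p), X.Adj (x i) (auxTau ρ z (x (i + 1))) →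
      X.Adj (auxTau ρ e (x i)) (auxTau ρ (e + z) (x (i + 1))) := by
    intro i e z hz
    rw [aux_adj_shift ρ hper]
    have : e + z - e = z := by ring
    rwa [this]
  have hedge : ∀ (i : ZMod k) (e f : ZMod p),
      X.Adj (auxTau ρ e (x i)) (auxTau ρ f (x (i + 1))) →
      X.Adj (x i) (auxTau ρ (f - e) (x (i + 1))) := by
    intro i e f h
    exact (aux_adj_shift ρ hper e f _ _).mp h
  by_cases hC : (∀ i : ZMod k, ∀ z : ZMod p, X.Adj (x i) (auxTau ρ z (x (i + 1))) → z = a i)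
      ∧ (∑ i : ZMod k, a i) = 0
  · -- second alternative
    right
    obtain ⟨hA1, hs0⟩ := hC
    haveI : Fact (1 < k) := ⟨by omega⟩
    set P : ℕ → ZMod p := fun n => ∑ t ∈ Finset.range n, a ((t : ℕ) : ZMod k) with hPdef
    have hPsucc : ∀ n : ℕ, P (n + 1) = P n + a ((n : ℕ) : ZMod k) := fun n =>
      Finset.sum_range_succ _ n
    have hPadd : ∀ n t : ℕ, P (n + k * t) = P n + t • (∑ i : ZMod k, a i) := fun n t =>
      aux_P_add_mul a n t
    have hPmod : ∀ n : ℕ, P n = P (n % k) := by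
      intro n
      conv_lhs => rw [show n = n % k + k * (n / k) from (Nat.mod_add_div n k).symm]
      rw [hPadd, hs0, smul_zero, add_zero]
    have hvalcast : ∀ j : ZMod k, ((j.val : ℕ) : ZMod k) = j := by
      intro j
      rw [ZMod.natCast_val, ZMod.cast_id]
    have hvalcastp : ∀ e : ZMod p, ((e.val : ℕ) : ZMod p) = e := by
      intro e
      rw [ZMod.natCast_val, ZMod.cast_id]
    set B : ZMod k → ZMod p := fun j => P j.val with hBdef
    have hB1 : ∀ j : ZMod k, B (j + 1) = B j + a j := by
      intro j
      show P (j + 1).val = P j.val + a j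
      rw [ZMod.val_add, ZMod.val_one, ← hPmod, hPsucc, hvalcast]
    set c : Fin p → ZMod k → V := fun t j => auxTau ρ (((t : ℕ) : ZMod p) + B j) (x j)
      with hcdef
    have hcmem : ∀ (t : Fin p) (j : ZMod k), c t j ∈ S j := fun t j => hxmem _ _
    have hne : ∀ (i : ZMod k) (u v : V), u ∈ S i → v ∈ S (i + 1) → u ≠ v := by
      intro i u v hu hv h
      exact hsucc i (hdisj i (i + 1) u hu (h ▸ hv))
    have hYadj : ∀ (i : ZMod k) (e : ZMod p),
        (SimpleGraph.fromRel fun u v =>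
            X.Adj u v ∧ ∃ i : ZMod k, u ∈ S i ∧ v ∈ S (i + 1)).Adj
          (auxTau ρ e (x i)) (auxTau ρ (e + a i) (x (i + 1))) := by
      intro i e
      rw [SimpleGraph.fromRel_adj]
      exact ⟨hne i _ _ (hxmem i e) (hxmem (i + 1) _),
        Or.inl ⟨hedge' i e (a i) (ha i), i, hxmem i e, hxmem (i + 1) _⟩⟩
    have hctau : ∀ (i : ZMod k) (e : ZMod p), c ⟨(e - B i).val, ZMod.val_lt _⟩ i =
        auxTau ρ e (x i) := by
      intro i e
      show auxTau ρ ((((e - B i).val : ℕ) : ZMod p) + B i) (x i) = auxTau ρ e (x i)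
      rw [hvalcastp, sub_add_cancel]
    have hcover : ∀ (u v : V), X.Adj u v → ∀ i : ZMod k, u ∈ S i → v ∈ S (i + 1) →
        ∃ t : Fin p, c t i = u ∧ c t (i + 1) = v := by
      intro u v hadj i hu hv
      obtain ⟨e, rfl⟩ := hmemS i u hu
      obtain ⟨f, rfl⟩ := hmemS (i + 1) v hv
      have hf : f = e + a i := by
        have := hA1 i (f - e) (hedge i e f hadj)
        linear_combination this
      refine ⟨⟨(e - B i).val, ZMod.val_lt _⟩, hctau i e, ?_⟩
      show auxTau ρ ((((e - B i).val : ℕ) : ZMod p) + B (i + 1)) (x (i + 1)) = _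
      rw [hvalcastp, hB1 i, hf]
      congr 1
      ring
    constructor
    · refine ⟨c, ?_, ?_, ?_, ?_, ?_⟩
      · -- injectivity of each cycle
        intro t j j' h
        exact hdisj j j' (c t j) (hcmem t j) (h ▸ hcmem t j')
      · -- adjacency
        intro t j
        show (SimpleGraph.fromRel _).Adj (auxTau ρ (((t : ℕ) : ZMod p) + B j) (x j))
          (auxTau ρ (((t : ℕ) : ZMod p) + B (j + 1)) (x (j + 1)))
        rw [hB1 j, ← add_assoc]
        exact hYadj j _
      · -- pairwise disjoint
        intro t t' htt
        rw [Set.disjoint_left]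
        rintro w ⟨j, rfl⟩ ⟨j', hj'⟩
        have hjj : j' = j := hdisj j' j (c t' j') (hcmem t' j') (hj' ▸ hcmem t j)
        rw [hjj] at hj'
        have he : ((t' : ℕ) : ZMod p) + B j = ((t : ℕ) : ZMod p) + B j :=
          aux_tau_inj ρ hper hj'
        have he2 : ((t' : ℕ) : ZMod p) = ((t : ℕ) : ZMod p) := by
          exact add_right_cancel he
        have := congrArg ZMod.val he2
        rw [ZMod.val_cast_of_lt t'.2, ZMod.val_cast_of_lt t.2] at this
        exact htt.symm (Fin.ext this)
      · -- union
        ext w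
        simp only [Set.mem_iUnion, Set.mem_range]
        constructor
        · rintro ⟨t, j, rfl⟩
          exact ⟨j, hcmem t j⟩
        · rintro ⟨i, hw⟩
          obtain ⟨e, rfl⟩ := hmemS i w hw
          exact ⟨⟨(e - B i).val, ZMod.val_lt _⟩, i, hctau i e⟩
      · -- every edge is covered
        intro u v huv
        rw [SimpleGraph.fromRel_adj] at huv
        obtain ⟨hne', h | h⟩ := huv
        · obtain ⟨hadj, i, hu, hv⟩ := h
          obtain ⟨t, h1, h2⟩ := hcover u v hadj i hu hv
          exact ⟨t, i, Or.inl ⟨h1, h2⟩⟩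
        · obtain ⟨hadj, i, hv, hu⟩ := h
          obtain ⟨t, h1, h2⟩ := hcover v u hadj i hv hu
          exact ⟨t, i, Or.inr ⟨h1, h2⟩⟩
    · -- unique neighbour
      intro i u hu
      obtain ⟨e, rfl⟩ := hmemS i u hu
      have hset : {w ∈ S (i + 1) | X.Adj (auxTau ρ e (x i)) w} =
          {auxTau ρ (e + a i) (x (i + 1))} := by
        ext w
        simp only [Set.mem_setOf_eq, Set.mem_singleton_iff]
        constructor
        · rintro ⟨hw, hadj⟩
          obtain ⟨f, rfl⟩ := hmemS (i + 1) w hw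
          have hf : f = e + a i := by
            have := hA1 i (f - e) (hedge i e f hadj)
            linear_combination this
          rw [hf]
        · rintro rfl
          exact ⟨hxmem _ _, hedge' i e (a i) (ha i)⟩
      rw [hset, Set.ncard_singleton]
  · -- first alternative
    left
    have hstrong : ∃ b : ZMod k → ZMod p,
        (∀ i, X.Adj (x i) (auxTau ρ (b i) (x (i + 1)))) ∧ (∑ i : ZMod k, b i) ≠ 0 := by
      rw [not_and_or] at hC
      rcases hC with h | h
      · push_neg at h
        obtain ⟨i0, z, hz, hzne⟩ := h
        by_cases h0 : (∑ i : ZMod k, a i) = 0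
        · refine ⟨Function.update a i0 z, fun i => ?_, ?_⟩
          · rcases eq_or_ne i i0 with rfl | hi
            · simpa [Function.update_self] using hz
            · simpa [Function.update_of_ne hi] using ha i
          · rw [Finset.sum_update_of_mem (Finset.mem_univ i0)]
            have h1 : ∑ i ∈ Finset.univ \ {i0}, a i = - a i0 := by
              have h2 := Finset.sum_eq_sum_sdiff_singleton_add (Finset.mem_univ i0) a
              rw [h0] at h2
              linear_combination -h2
            rw [h1]
            intro hcon
            exact hzne (by linear_combination hcon)
        · exact ⟨a, ha, h0⟩
      · exact ⟨a, ha, h⟩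
    obtain ⟨b, hb, hbs⟩ := hstrong
    set P : ℕ → ZMod p := fun n => ∑ t ∈ Finset.range n, b ((t : ℕ) : ZMod k) with hPdef
    have hPsucc : ∀ n : ℕ, P (n + 1) = P n + b ((n : ℕ) : ZMod k) := fun n =>
      Finset.sum_range_succ _ n
    have hPadd : ∀ n t : ℕ, P (n + k * t) = P n + t • (∑ i : ZMod k, b i) := fun n t =>
      aux_P_add_mul b n t
    have hred : ∀ n : ℕ, auxTau ρ (P n) (x ((n : ℕ) : ZMod k)) =
        auxTau ρ (P (n % (k * p))) (x ((n % (k * p) : ℕ) : ZMod k)) := by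
      intro n
      have hn : n = n % (k * p) + k * (p * (n / (k * p))) := by
        rw [← Nat.mul_assoc]
        exact (Nat.mod_add_div n (k * p)).symm
      have hbase : ((n : ℕ) : ZMod k) = ((n % (k * p) : ℕ) : ZMod k) := by
        conv_lhs => rw [hn]
        push_cast [ZMod.natCast_self]
        ring
      have hexp : P n = P (n % (k * p)) := by
        conv_lhs => rw [hn]
        rw [hPadd, nsmul_eq_mul]
        have hz : ((p * (n / (k * p)) : ℕ) : ZMod p) = 0 := by
          rw [ZMod.natCast_eq_zero_iff]
          exact Dvd.intro _ rfl
        rw [hz, zero_mul, add_zero]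
      rw [hbase, hexp]
    set c : ZMod (k * p) → V := fun j => auxTau ρ (P j.val) (x ((j.val : ℕ) : ZMod k))
      with hcdef
    haveI : Fact (1 < k * p) := ⟨by have := hp.two_le; nlinarith⟩
    have hcmem : ∀ j : ZMod (k * p), c j ∈ S ((j.val : ℕ) : ZMod k) := fun j => hxmem _ _
    have hstep : ∀ n : ℕ, X.Adj (auxTau ρ (P n) (x ((n : ℕ) : ZMod k)))
        (auxTau ρ (P (n + 1)) (x ((n + 1 : ℕ) : ZMod k))) := by
      intro n
      rw [hPsucc n, show ((n + 1 : ℕ) : ZMod k) = ((n : ℕ) : ZMod k) + 1 from by push_cast; ring]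
      exact hedge' _ _ _ (hb _)
    have hvadd : ∀ j : ZMod (k * p), (j + 1).val = (j.val + 1) % (k * p) := by
      intro j
      rw [ZMod.val_add, ZMod.val_one]
    have hc1 : ∀ j : ZMod (k * p), c (j + 1) =
        auxTau ρ (P (j.val + 1)) (x ((j.val + 1 : ℕ) : ZMod k)) := by
      intro j
      show auxTau ρ (P (j + 1).val) (x (((j + 1).val : ℕ) : ZMod k)) = _
      rw [hvadd]
      exact (hred (j.val + 1)).symm
    refine ⟨c, ?_, ?_, ?_⟩
    · -- injectivity
      have key : ∀ j j' : ZMod (k * p), j'.val ≤ j.val → c j = c j' → j = j' := by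
        intro j j' hle hcc
        have hii : ((j.val : ℕ) : ZMod k) = ((j'.val : ℕ) : ZMod k) :=
          hdisj _ _ (c j) (hcmem j) (hcc ▸ hcmem j')
        have hmodeq : j'.val ≡ j.val [MOD k] := by
          have := (ZMod.natCast_eq_natCast_iff _ _ _).mp hii
          exact this.symm
        obtain ⟨t, ht⟩ := (Nat.modEq_iff_dvd' hle).mp hmodeq
        have hjj' : j.val = j'.val + k * t := by omega
        have hPP : P j.val = P j'.val := by
          apply aux_tau_inj ρ hper (v := x ((j'.val : ℕ) : ZMod k))
          have hcc' : c j = auxTau ρ (P j.val) (x ((j'.val : ℕ) : ZMod k)) := by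
            rw [hcdef]
            simp only
            rw [hii]
          rw [← hcc', hcc]
        have hts : (t : ZMod p) * (∑ i : ZMod k, b i) = 0 := by
          have h3 : P j.val = P j'.val + t • (∑ i : ZMod k, b i) := by
            conv_lhs => rw [hjj']
            exact hPadd j'.val t
          rw [hPP, nsmul_eq_mul] at h3
          linear_combination -h3
        have htz : ((t : ℕ) : ZMod p) = 0 := by
          rcases mul_eq_zero.mp hts with h | h
          · exact h
          · exact absurd h hbs
        have hpt : p ∣ t := (ZMod.natCast_eq_zero_iff t p).mp htz
        have hjlt : j.val < k * p := ZMod.val_lt j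
        have htlt : t < p := by
          by_contra hge
          push_neg at hge
          have : k * p ≤ k * t := Nat.mul_le_mul_left k hge
          omega
        have ht0 : t = 0 := by
          rcases hpt with ⟨u, rfl⟩
          rcases Nat.eq_zero_or_pos u with rfl | hu
          · simp
          · exfalso
            have := hp.pos
            nlinarith
        apply ZMod.val_injective
        rw [ht0, Nat.mul_zero, Nat.add_zero] at hjj'
        exact hjj'
      intro j j' hcc
      rcases le_total j'.val j.val with h | h
      · exact key j j' h hcc
      · exact (key j' j h hcc.symm).symm
    · -- adjacency
      intro j
      rw [hc1 j]
      exact hstep j.val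
    · -- membership
      intro j
      have hch : ZMod.castHom (dvd_mul_right k p) (ZMod k) j = ((j.val : ℕ) : ZMod k) := by
        rw [ZMod.castHom_apply]
        exact (ZMod.natCast_val j).symm
      rw [hch]
      exact hcmem j
end
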